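/- arXiv:1311.7352 — 15 statements merged into one kernel-verified Lean document; each statement's English description precedes it below -/
import Mathlib

section
/- If A is a bounded linear operator on a Hilbert space H and there exist positive operators P, Q in B(H) with A Q A* = A* P A, and Q is injective (equivalently has dense range), then ker A ⊆ ker A*. -/
open ContinuousLinearMap

lemma pos_inner_self_zero
    {H : Type*} [NormedAddCommGroup H] [InnerProductSpace ℂ H] [CompleteSpace H]
    (Q : H →L[ℂ] H) (hQ : Q.IsPositive) (y : H)
    (hy : inner ℂ (Q y) y = (0 : ℂ)) : Q y = 0 := by
  have hsa : IsSelfAdjoint Q := hQ.isSelfAdjoint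
  have hsym : ∀ a b : H, (inner ℂ (Q a) b : ℂ) = inner ℂ a (Q b) := fun a b => by
    rw [← ContinuousLinearMap.adjoint_inner_left, hsa.adjoint_eq]
  letI c : PreInnerProductSpace.Core ℂ H :=
    { inner := fun a b => inner ℂ (Q a) b
      conj_inner_symm := fun a b => by
        rw [inner_conj_symm, ← hsym]
      re_inner_nonneg := fun a => (RCLike.nonneg_iff.mp (hQ.inner_nonneg_left a)).1
      add_left := fun a b z => by simp [inner_add_left]
      smul_left := fun a b r => by simp [inner_smul_left, mul_comm] }
  have cs : ‖(inner ℂ (Q y) (Q y) : ℂ)‖ * ‖(inner ℂ (Q (Q y)) y : ℂ)‖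
      ≤ RCLike.re (inner ℂ (Q y) y : ℂ) * RCLike.re (inner ℂ (Q (Q y)) (Q y) : ℂ) :=
    InnerProductSpace.Core.inner_mul_inner_self_le (𝕜 := ℂ) (c := c) y (Q y)
  rw [hy, hsym (Q y) y] at cs
  simp only [map_zero, zero_mul] at cs
  have h5 : ‖(inner ℂ (Q y) (Q y) : ℂ)‖ = 0 := by
    nlinarith [norm_nonneg (inner ℂ (Q y) (Q y) : ℂ)]
  exact inner_self_eq_zero.mp (norm_eq_zero.mp h5)

theorem supraposinormal_kerA_le_kerAdj
    {H : Type*} [NormedAddCommGroup H] [InnerProductSpace ℂ H] [CompleteSpace H]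
    (A P Q : H →L[ℂ] H) (hP : P.IsPositive) (hQ : Q.IsPositive)
    (hQinj : Function.Injective Q)
    (h : A ∘L Q ∘L adjoint A = adjoint A ∘L P ∘L A) :
    LinearMap.ker (A : H →ₗ[ℂ] H) ≤ LinearMap.ker ((adjoint A : H →L[ℂ] H) : H →ₗ[ℂ] H) := by
  intro x hx
  have hAx : A x = 0 := hx
  set y := adjoint A x with hy
  have h0 : (A ∘L Q ∘L adjoint A) x = 0 := by
    rw [h]; simp [hAx]
  have hin : (inner ℂ (Q y) y : ℂ) = 0 := by
    have h1 : (inner ℂ ((A ∘L Q ∘L adjoint A) x) x : ℂ) = 0 := by rw [h0]; simp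
    rwa [ContinuousLinearMap.comp_apply, ContinuousLinearMap.comp_apply,
      ← ContinuousLinearMap.adjoint_inner_right] at h1
  have hQy : Q y = 0 := pos_inner_self_zero Q hQ y hin
  have : y = 0 := hQinj (by simp [hQy])
  exact this
end

section
/- If A is a bounded linear operator on a Hilbert space H and there exist positive operators P, Q in B(H) with A Q A* = A* P A, and P has dense range, then ker A* ⊆ ker A. -/
set_option synthInstance.maxHeartbeats 1000000
set_option maxHeartbeats 1000000


open ContinuousLinearMap

lemma aux_pos_inner_zero
    {H : Type*} [NormedAddCommGroup H] [InnerProductSpace ℂ H] [CompleteSpace H]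
    (P : H →L[ℂ] H) (hP : P.IsPositive) (x : H)
    (hx : (inner ℂ (P x) x : ℂ) = 0) : P x = 0 := by
  have hP' : (0 : H →L[ℂ] H) ≤ P := (nonneg_iff_isPositive P).mpr hP
  set S := CFC.sqrt P with hS
  have hSnn : (0 : H →L[ℂ] H) ≤ S := CFC.sqrt_nonneg (a := P)
  have hSS : S * S = P := CFC.sqrt_mul_sqrt_self P hP'
  have hSsa : IsSelfAdjoint S := ((nonneg_iff_isPositive S).mp hSnn).isSelfAdjoint
  have hSSx : S (S x) = P x := by
    have := congrArg (fun T : H →L[ℂ] H => T x) hSS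
    simpa [mul_apply] using this
  have h1 : (inner ℂ (S x) (S x) : ℂ) = 0 := by
    rw [← adjoint_inner_left S x (S x), hSsa.adjoint_eq, hSSx, hx]
  have h2 : S x = 0 := inner_self_eq_zero.mp h1
  rw [← hSSx, h2, map_zero]

theorem supraposinormal_kerAdj_le_kerA
    {H : Type*} [NormedAddCommGroup H] [InnerProductSpace ℂ H] [CompleteSpace H]
    (A P Q : H →L[ℂ] H) (hP : P.IsPositive) (hQ : Q.IsPositive)
    (hPdense : DenseRange P)
    (h : A ∘L Q ∘L adjoint A = adjoint A ∘L P ∘L A) :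
    LinearMap.ker (adjoint A : H →ₗ[ℂ] H) ≤ LinearMap.ker (A : H →ₗ[ℂ] H) := by
  intro x hx
  have hx' : adjoint A x = 0 := hx
  have h0 : (adjoint A ∘L P ∘L A) x = 0 := by
    rw [← h]; simp [comp_apply, hx']
  have hinner : (inner ℂ (P (A x)) (A x) : ℂ) = 0 := by
    have : (inner ℂ ((adjoint A ∘L P ∘L A) x) x : ℂ) = inner ℂ (P (A x)) (A x) := by
      simp [comp_apply, adjoint_inner_left]
    rw [← this, h0, inner_zero_left]
  have hPAx : P (A x) = 0 := aux_pos_inner_zero P hP (A x) hinner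
  -- A x ⊥ range P, which is dense, so A x = 0
  have hperp : ∀ z : H, (inner ℂ (A x) (P z) : ℂ) = 0 := by
    intro z
    have : (inner ℂ (P (A x)) z : ℂ) = inner ℂ (A x) (P z) := by
      rw [← adjoint_inner_left, hP.isSelfAdjoint.adjoint_eq]
    rw [← this, hPAx, inner_zero_left]
  have hAx : A x = 0 := by
    have hdense : Dense ((LinearMap.range (P : H →ₗ[ℂ] H) : Submodule ℂ H) : Set H) := by
      rw [LinearMap.coe_range, ContinuousLinearMap.coe_coe]; exact hPdense
    refine hdense.eq_zero_of_inner_left (𝕜 := ℂ) fun v hv => ?_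
    obtain ⟨z, hz⟩ := hv
    rw [← hz]; exact hperp z
  exact hAx
end

section
/- If A is a bounded operator on Hilbert space H with A Q A* = A* P A for positive operators P, Q where Q is invertible, then A is posinormal, i.e., there exists γ ≥ 0 with γ² A*A ≥ A A* (in the ordering of self-adjoint operators). -/
open ContinuousLinearMap

/-- Generalized Cauchy–Schwarz for a positive operator. -/
lemma pos_op_cauchy_schwarz
    {H : Type*} [NormedAddCommGroup H] [InnerProductSpace ℂ H] [CompleteSpace H]
    (Q : H →L[ℂ] H) (hQ : Q.IsPositive) (u v : H) :
    ‖(inner ℂ (Q u) v : ℂ)‖ ^ 2 ≤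
      RCLike.re (inner ℂ (Q u) u : ℂ) * RCLike.re (inner ℂ (Q v) v : ℂ) := by
  have hsa : LinearMap.IsSymmetric (Q : H →ₗ[ℂ] H) :=
    (isSelfAdjoint_iff_isSymmetric).mp hQ.isSelfAdjoint
  have hsaC : ∀ a b : H, (inner ℂ (Q a) b : ℂ) = inner ℂ a (Q b) := fun a b => hsa a b
  letI core : PreInnerProductSpace.Core ℂ H :=
    { inner := fun x y => (inner ℂ (Q x) y : ℂ)
      conj_inner_symm := fun x y =>
        (inner_conj_symm x (Q y)).trans (hsaC x y).symm
      re_inner_nonneg := fun x => hQ.2 x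
      add_left := fun x y z => by simp [inner_add_left]
      smul_left := fun x y r => by simp [inner_smul_left, mul_comm] }
  have key := @InnerProductSpace.Core.inner_mul_inner_self_le ℂ H _ _ _ core u v
  change ‖(inner ℂ (Q u) v : ℂ)‖ * ‖(inner ℂ (Q v) u : ℂ)‖ ≤
      RCLike.re (inner ℂ (Q u) u : ℂ) * RCLike.re (inner ℂ (Q v) v : ℂ) at key
  have hswap : ‖(inner ℂ (Q v) u : ℂ)‖ = ‖(inner ℂ (Q u) v : ℂ)‖ := by
    rw [hsaC v u, ← inner_conj_symm, RCLike.norm_conj]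
  rw [hswap, ← sq] at key
  exact key

theorem supraposinormal_of_invertible_Q_posinormal
    {H : Type*} [NormedAddCommGroup H] [InnerProductSpace ℂ H] [CompleteSpace H]
    (A P Q : H →L[ℂ] H) (hP : P.IsPositive) (hQ : Q.IsPositive)
    (hQinv : ∃ Qi : H →L[ℂ] H, Q ∘L Qi = 1 ∧ Qi ∘L Q = 1)
    (h : A ∘L Q ∘L adjoint A = adjoint A ∘L P ∘L A) :
    ∃ γ : ℝ, 0 ≤ γ ∧
      (((γ : ℂ) ^ 2 • (adjoint A ∘L A)) - A ∘L adjoint A).IsPositive := by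
  obtain ⟨Qi, hQQi, hQiQ⟩ := hQinv
  set γ : ℝ := Real.sqrt (‖P‖ * ‖Qi‖) with hγdef
  have hPQi : (0:ℝ) ≤ ‖P‖ * ‖Qi‖ := mul_nonneg (norm_nonneg _) (norm_nonneg _)
  have hγ0 : 0 ≤ γ := Real.sqrt_nonneg _
  have hγsq : γ ^ 2 = ‖P‖ * ‖Qi‖ := Real.sq_sqrt hPQi
  refine ⟨γ, hγ0, ?_, ?_⟩
  · -- self-adjointness
    refine isSelfAdjoint_iff_isSymmetric.mp ?_
    rw [IsSelfAdjoint]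
    simp only [star_sub, star_smul, star_eq_adjoint, adjoint_comp, adjoint_adjoint]
    congr 1
    simp [← Complex.ofReal_pow, Complex.conj_ofReal]
  · intro x
    have hQsa : LinearMap.IsSymmetric (Q : H →ₗ[ℂ] H) :=
      (isSelfAdjoint_iff_isSymmetric).mp hQ.isSelfAdjoint
    have hQsaC : ∀ a b : H, (inner ℂ (Q a) b : ℂ) = inner ℂ a (Q b) := fun a b => hQsa a b
    set y : H := adjoint A x with hy
    have hQQiy : ∀ z : H, Q (Qi z) = z := fun z => by
      have := congrArg (fun f : H →L[ℂ] H => f z) hQQi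
      simpa using this
    -- key inequality : ‖y‖^2 ≤ ‖Qi‖ * re ⟪Q y, y⟫
    have hkey : ‖y‖ ^ 2 ≤ ‖Qi‖ * RCLike.re (inner ℂ (Q y) y : ℂ) := by
      rcases eq_or_ne y 0 with h0 | h0
      · simp [h0]
      · have cs := pos_op_cauchy_schwarz Q hQ y (Qi y)
        have h1 : (inner ℂ (Q y) (Qi y) : ℂ) = (inner ℂ y y : ℂ) := by
          rw [hQsaC, hQQiy]
        rw [h1] at cs
        have h2 : ‖(inner ℂ y y : ℂ)‖ = ‖y‖ ^ 2 := by
          rw [@inner_self_eq_norm_sq_to_K ℂ]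
          simp [← Complex.ofReal_pow]
        rw [h2] at cs
        have h3 : RCLike.re (inner ℂ (Q (Qi y)) (Qi y) : ℂ) ≤ ‖Qi‖ * ‖y‖ ^ 2 := by
          rw [hQQiy]
          calc RCLike.re (inner ℂ y (Qi y) : ℂ) ≤ ‖(inner ℂ y (Qi y) : ℂ)‖ :=
                RCLike.re_le_norm _
            _ ≤ ‖y‖ * ‖Qi y‖ := norm_inner_le_norm _ _
            _ ≤ ‖y‖ * (‖Qi‖ * ‖y‖) :=
                mul_le_mul_of_nonneg_left (Qi.le_opNorm y) (norm_nonneg _)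
            _ = ‖Qi‖ * ‖y‖ ^ 2 := by ring
        have hQyy : 0 ≤ RCLike.re (inner ℂ (Q y) y : ℂ) := hQ.2 y
        have hyn : (0:ℝ) < ‖y‖ ^ 2 := pow_pos (norm_pos_iff.mpr h0) 2
        have hh : (‖y‖ ^ 2) ^ 2 ≤ RCLike.re (inner ℂ (Q y) y : ℂ) * (‖Qi‖ * ‖y‖ ^ 2) :=
          le_trans cs (mul_le_mul_of_nonneg_left h3 hQyy)
        nlinarith [hh, hyn]
    -- re ⟪Q y, y⟫ = re ⟪P (A x), A x⟫
    have hmid : RCLike.re (inner ℂ (Q y) y : ℂ) = RCLike.re (inner ℂ (P (A x)) (A x) : ℂ) := by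
      have h1 : (inner ℂ ((A ∘L Q ∘L adjoint A) x) x : ℂ) = (inner ℂ (Q y) y : ℂ) := by
        simp only [comp_apply, ← hy]
        rw [← adjoint_inner_right]
      have h2 : (inner ℂ ((adjoint A ∘L P ∘L A) x) x : ℂ) = (inner ℂ (P (A x)) (A x) : ℂ) := by
        simp only [comp_apply]
        rw [adjoint_inner_left]
      rw [← h1, h, h2]
    have hP2 : RCLike.re (inner ℂ (P (A x)) (A x) : ℂ) ≤ ‖P‖ * ‖A x‖ ^ 2 := by
      calc RCLike.re (inner ℂ (P (A x)) (A x) : ℂ) ≤ ‖(inner ℂ (P (A x)) (A x) : ℂ)‖ :=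
            RCLike.re_le_norm _
        _ ≤ ‖P (A x)‖ * ‖A x‖ := norm_inner_le_norm _ _
        _ ≤ ‖P‖ * ‖A x‖ * ‖A x‖ :=
            mul_le_mul_of_nonneg_right (P.le_opNorm (A x)) (norm_nonneg _)
        _ = ‖P‖ * ‖A x‖ ^ 2 := by ring
    have hfinal : ‖y‖ ^ 2 ≤ γ ^ 2 * ‖A x‖ ^ 2 := by
      rw [hγsq]
      calc ‖y‖ ^ 2 ≤ ‖Qi‖ * RCLike.re (inner ℂ (Q y) y : ℂ) := hkey
        _ = ‖Qi‖ * RCLike.re (inner ℂ (P (A x)) (A x) : ℂ) := by rw [hmid]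
        _ ≤ ‖Qi‖ * (‖P‖ * ‖A x‖ ^ 2) :=
            mul_le_mul_of_nonneg_left hP2 (norm_nonneg _)
        _ = ‖P‖ * ‖Qi‖ * ‖A x‖ ^ 2 := by ring
    -- now compute reApplyInnerSelf
    rw [reApplyInnerSelf_apply]
    simp only [sub_apply, smul_apply, comp_apply, inner_sub_left, inner_smul_left, map_sub]
    have e1 : (inner ℂ ((adjoint A) (A x)) x : ℂ) = (inner ℂ (A x) (A x) : ℂ) := by
      rw [adjoint_inner_left]
    have e2 : (inner ℂ (A ((adjoint A) x)) x : ℂ) = (inner ℂ y y : ℂ) := by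
      rw [← adjoint_inner_right]
    rw [e1, e2]
    have r1 : RCLike.re ((starRingEnd ℂ) ((γ:ℂ) ^ 2) * (inner ℂ (A x) (A x) : ℂ))
        = γ ^ 2 * ‖A x‖ ^ 2 := by
      rw [← Complex.ofReal_pow, Complex.conj_ofReal, @inner_self_eq_norm_sq_to_K ℂ]
      norm_cast
      simp [← Complex.ofReal_pow]
    have r2 : RCLike.re (inner ℂ y y : ℂ) = ‖y‖ ^ 2 := by
      rw [@inner_self_eq_norm_sq_to_K ℂ]
      norm_cast
    rw [r1, r2]
    linarith [hfinal]
end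

section
/- If A is a bounded operator on Hilbert space H with A P A* = A* P A for a single positive operator P with dense range, then ker A = ker A*, and moreover √P A √P is a normal operator. -/
open ContinuousLinearMap

lemma P_inj {H : Type*} [NormedAddCommGroup H] [InnerProductSpace ℂ H] [CompleteSpace H]
    (P : H →L[ℂ] H) (hP : P.IsPositive) (hPdense : DenseRange P) {x : H}
    (hx : P x = 0) : x = 0 := by
  have hd : Dense ((LinearMap.range (P : H →ₗ[ℂ] H) : Submodule ℂ H) : Set H) := by
    simpa [LinearMap.coe_range, DenseRange] using hPdense
  refine hd.eq_zero_of_inner_right ℂ ?_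
  rintro _ ⟨y, rfl⟩
  have hadj : ContinuousLinearMap.adjoint P = P := hP.isSelfAdjoint.adjoint_eq
  calc inner ℂ (P y) x = inner ℂ y (P x) := by
        conv_lhs => rw [← hadj]
        exact ContinuousLinearMap.adjoint_inner_left P x y
    _ = (0 : ℂ) := by rw [hx, inner_zero_right]

/-- If A P A* = A* P A for a single positive operator P with dense range, then
ker A = ker A*, and √P A √P is normal (S denotes the positive square root of P). -/
theorem supraposinormal_equal_interrupters
    {H : Type*} [NormedAddCommGroup H] [InnerProductSpace ℂ H] [CompleteSpace H]
    (A P S : H →L[ℂ] H) (hP : P.IsPositive) (hPdense : DenseRange P)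
    (hS : S.IsPositive) (hS2 : S ∘L S = P)
    (h : A ∘L P ∘L adjoint A = adjoint A ∘L P ∘L A) :
    LinearMap.ker (A : H →ₗ[ℂ] H) = LinearMap.ker ((adjoint A : H →L[ℂ] H) : H →ₗ[ℂ] H) ∧
      (S ∘L A ∘L S) ∘L adjoint (S ∘L A ∘L S)
        = adjoint (S ∘L A ∘L S) ∘L (S ∘L A ∘L S) := by
  have hSadj : adjoint S = S := hS.isSelfAdjoint.adjoint_eq
  have key : ∀ x : H, inner ℂ ((A ∘L P ∘L adjoint A) x) x
      = (‖S (adjoint A x)‖ : ℂ) ^ 2 := by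
    intro x
    have : (A ∘L P ∘L adjoint A) x = A (S (S (adjoint A x))) := by
      simp [← hS2]
    rw [this, ← ContinuousLinearMap.adjoint_inner_right A,
      ← hSadj, ContinuousLinearMap.adjoint_inner_left, hSadj,
      inner_self_eq_norm_sq_to_K]
    norm_cast
  have key' : ∀ x : H, inner ℂ ((adjoint A ∘L P ∘L A) x) x
      = (‖S (A x)‖ : ℂ) ^ 2 := by
    intro x
    have : (adjoint A ∘L P ∘L A) x = adjoint A (S (S (A x))) := by
      simp [← hS2]
    rw [this, ContinuousLinearMap.adjoint_inner_left,
      ← hSadj, ContinuousLinearMap.adjoint_inner_left, hSadj,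
      inner_self_eq_norm_sq_to_K]
    norm_cast
  have norms : ∀ x : H, ‖S (adjoint A x)‖ = ‖S (A x)‖ := by
    intro x
    have h1 : (‖S (adjoint A x)‖ : ℂ) ^ 2 = (‖S (A x)‖ : ℂ) ^ 2 := by
      rw [← key x, ← key' x, h]
    have hr : ‖S (adjoint A x)‖ ^ 2 = ‖S (A x)‖ ^ 2 := by exact_mod_cast h1
    nlinarith [norm_nonneg (S (adjoint A x)), norm_nonneg (S (A x))]
  have kerstep : ∀ x : H, S (adjoint A x) = 0 → adjoint A x = 0 := by
    intro x hx
    refine P_inj P hP hPdense ?_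
    rw [← hS2]; simp [hx]
  have kerstep' : ∀ x : H, S (A x) = 0 → A x = 0 := by
    intro x hx
    refine P_inj P hP hPdense ?_
    rw [← hS2]; simp [hx]
  constructor
  · ext x
    simp only [LinearMap.mem_ker, ContinuousLinearMap.coe_coe]
    constructor
    · intro hx
      refine kerstep x ?_
      have := norms x
      rw [hx, map_zero, norm_zero] at this
      exact norm_eq_zero.mp this
    · intro hx
      refine kerstep' x ?_
      have := norms x
      rw [hx, map_zero, norm_zero] at this
      exact norm_eq_zero.mp this.symm
  · have : adjoint (S ∘L A ∘L S) = S ∘L adjoint A ∘L S := by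
      simp [ContinuousLinearMap.adjoint_comp, hSadj, ContinuousLinearMap.comp_assoc]
    rw [this]
    calc (S ∘L A ∘L S) ∘L (S ∘L adjoint A ∘L S)
        = S ∘L (A ∘L P ∘L adjoint A) ∘L S := by
          simp only [← hS2, ContinuousLinearMap.comp_assoc]
      _ = S ∘L (adjoint A ∘L P ∘L A) ∘L S := by rw [h]
      _ = (S ∘L adjoint A ∘L S) ∘L (S ∘L A ∘L S) := by
          simp only [← hS2, ContinuousLinearMap.comp_assoc]
end

section
/- Suppose A ∈ B(H) and (Q,P) is a pair of positive operators such that (A − λ) Q (A − λ)* = (A − λ)* P (A − λ) for three distinct real values λ = 0, r₁, r₂. Then Q = P. -/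
open ContinuousLinearMap

/-- If (A − λ) Q (A − λ)* = (A − λ)* P (A − λ) for λ = 0, r₁, r₂ distinct reals,
then Q = P. -/
theorem interrupter_pair_eq_of_three_translates
    {H : Type*} [NormedAddCommGroup H] [InnerProductSpace ℂ H] [CompleteSpace H]
    (A P Q : H →L[ℂ] H) (hP : P.IsPositive) (hQ : Q.IsPositive)
    (r₁ r₂ : ℝ) (hr₁ : r₁ ≠ 0) (hr₂ : r₂ ≠ 0) (hr : r₁ ≠ r₂)
    (h : ∀ lam : ℝ, lam = 0 ∨ lam = r₁ ∨ lam = r₂ →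
      (A - (lam : ℂ) • 1) ∘L Q ∘L adjoint (A - (lam : ℂ) • 1)
        = adjoint (A - (lam : ℂ) • 1) ∘L P ∘L (A - (lam : ℂ) • 1)) :
    Q = P := by
  have hadj : ∀ r : ℝ, adjoint (A - (r : ℂ) • 1) = adjoint A - (r : ℂ) • 1 := fun r => by
    simp [← star_eq_adjoint, star_smul, Complex.star_def, Complex.conj_ofReal]
  have e0 := h 0 (Or.inl rfl)
  have e1 := h r₁ (Or.inr (Or.inl rfl))
  have e2 := h r₂ (Or.inr (Or.inr rfl))
  rw [hadj] at e0 e1 e2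
  simp only [Complex.ofReal_zero, zero_smul, sub_zero, ← mul_def] at e0 e1 e2
  have key : ((r₁ : ℂ) * r₂ * ((r₁ : ℂ) - r₂)) • Q = ((r₁ : ℂ) * r₂ * ((r₁ : ℂ) - r₂)) • P := by
    linear_combination (norm :=
      (simp only [mul_sub, sub_mul, smul_sub, sub_smul, smul_smul, mul_smul_comm,
        smul_mul_assoc, mul_one, one_mul]; module))
      (r₂ : ℂ) • e1 - (r₁ : ℂ) • e2 - ((r₂ : ℂ) - r₁) • e0
  have hc : ((r₁ : ℂ) * r₂ * ((r₁ : ℂ) - r₂)) ≠ 0 := by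
    simp only [ne_eq, mul_eq_zero, sub_eq_zero]
    exact_mod_cast by
      rintro ((h1 | h2) | h3)
      · exact hr₁ (by exact_mod_cast h1)
      · exact hr₂ (by exact_mod_cast h2)
      · exact hr (by exact_mod_cast h3)
  exact smul_right_injective _ hc key
end

section
/- Let A be supraposinormal on H with A Q A* = A* P A where Q, P are positive operators and at least one of them has dense range. If D is a positive operator and there exist constants δ₁, δ₂ > 0 with δ₁Q ≥ D ≥ δ₂P ≥ 0, then the operator √D A √D is posinormal, i.e., (δ₁/δ₂)(√D A* √D)(√D A √D) ≥ (√D A √D)(√D A* √D). -/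
open ContinuousLinearMap

lemma smul_isPos {H : Type*} [NormedAddCommGroup H] [InnerProductSpace ℂ H] [CompleteSpace H]
    {T : H →L[ℂ] H} (hT : T.IsPositive) {c : ℝ} (hc : 0 ≤ c) : ((c:ℂ) • T).IsPositive := by
  exact hT.smul_of_nonneg (by exact_mod_cast hc)

/-- If A Q A* = A* P A with Q or P of dense range, D positive, and
δ₁Q ≥ D ≥ δ₂P ≥ 0 with δ₁, δ₂ > 0, then (with S = √D) the operator S A S
is posinormal: (δ₁/δ₂)(S A* S)(S A S) ≥ (S A S)(S A* S). -/
theorem sqrtD_A_sqrtD_posinormal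
    {H : Type*} [NormedAddCommGroup H] [InnerProductSpace ℂ H] [CompleteSpace H]
    (A P Q D S : H →L[ℂ] H) (hP : P.IsPositive) (hQ : Q.IsPositive)
    (hdense : DenseRange Q ∨ DenseRange P)
    (h : A ∘L Q ∘L adjoint A = adjoint A ∘L P ∘L A)
    (hD : D.IsPositive) (hS : S.IsPositive) (hS2 : S ∘L S = D)
    (δ₁ δ₂ : ℝ) (hδ₁ : 0 < δ₁) (hδ₂ : 0 < δ₂)
    (h1 : ((δ₁ : ℂ) • Q - D).IsPositive)
    (h2 : (D - (δ₂ : ℂ) • P).IsPositive) :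
    (((δ₁ / δ₂ : ℝ) : ℂ) • ((S ∘L adjoint A ∘L S) ∘L (S ∘L A ∘L S))
      - (S ∘L A ∘L S) ∘L (S ∘L adjoint A ∘L S)).IsPositive := by
  have hSA : adjoint S = S := hS.isSelfAdjoint.adjoint_eq
  have hp1 : (A ∘L (((δ₁ : ℂ) • Q - D)) ∘L adjoint A).IsPositive := h1.conj_adjoint A
  have hp2 : (adjoint A ∘L ((D - (δ₂ : ℂ) • P)) ∘L A).IsPositive := by
    have := h2.conj_adjoint (adjoint A)
    rwa [adjoint_adjoint] at this
  have hMpos : (((δ₁ / δ₂ : ℝ) : ℂ) • (adjoint A ∘L (D - (δ₂ : ℂ) • P) ∘L A)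
      + A ∘L ((δ₁ : ℂ) • Q - D) ∘L adjoint A).IsPositive :=
    (smul_isPos hp2 (le_of_lt (div_pos hδ₁ hδ₂))).add hp1
  have hδ₂' : (δ₂ : ℂ) ≠ 0 := by exact_mod_cast hδ₂.ne'
  have hpt : ∀ x, A (Q (adjoint A x)) = adjoint A (P (A x)) := fun x => by
    have := DFunLike.congr_fun h x
    simpa [comp_apply] using this
  have mid : ((δ₁ / δ₂ : ℝ) : ℂ) • (adjoint A ∘L D ∘L A) - A ∘L D ∘L adjoint A
      = ((δ₁ / δ₂ : ℝ) : ℂ) • (adjoint A ∘L (D - (δ₂ : ℂ) • P) ∘L A)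
        + A ∘L ((δ₁ : ℂ) • Q - D) ∘L adjoint A := by
    ext x
    simp only [comp_apply, smul_apply, sub_apply, add_apply, map_sub, map_smul]
    rw [hpt x]
    push_cast
    match_scalars <;> field_simp <;> ring
  have key : ((δ₁ / δ₂ : ℝ) : ℂ) • ((S ∘L adjoint A ∘L S) ∘L (S ∘L A ∘L S))
      - (S ∘L A ∘L S) ∘L (S ∘L adjoint A ∘L S)
      = S ∘L (((δ₁ / δ₂ : ℝ) : ℂ) • (adjoint A ∘L (D - (δ₂ : ℂ) • P) ∘L A)
          + A ∘L ((δ₁ : ℂ) • Q - D) ∘L adjoint A) ∘L S := by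
    have e1 : (S ∘L A ∘L S) ∘L (S ∘L adjoint A ∘L S) = S ∘L (A ∘L D ∘L adjoint A) ∘L S := by
      rw [← hS2]; rfl
    have e2 : (S ∘L adjoint A ∘L S) ∘L (S ∘L A ∘L S) = S ∘L (adjoint A ∘L D ∘L A) ∘L S := by
      rw [← hS2]; rfl
    rw [e1, e2, ← mid]
    ext x
    simp [comp_apply, sub_apply, smul_apply, map_sub, map_smul]
  rw [key]
  have := hMpos.conj_adjoint S
  rwa [hSA] at this
end

section
/- Let A be a bounded operator with A Q A* = A* P A for positive operators Q, P, and suppose there exist constants 0 < δ₁ ≤ δ₂ with δ₁Q ≥ I ≥ δ₂P ≥ 0. Then A is hyponormal, i.e., A*A ≥ AA*. -/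
open ContinuousLinearMap
open scoped InnerProductSpace

/-- If A Q A* = A* P A and δ₁Q ≥ I ≥ δ₂P ≥ 0 with 0 < δ₁ ≤ δ₂, then A is
hyponormal: A*A ≥ AA*. -/
theorem hyponormal_of_interrupter_pair
    {H : Type*} [NormedAddCommGroup H] [InnerProductSpace ℂ H] [CompleteSpace H]
    (A P Q : H →L[ℂ] H) (hP : P.IsPositive) (hQ : Q.IsPositive)
    (h : A ∘L Q ∘L adjoint A = adjoint A ∘L P ∘L A)
    (δ₁ δ₂ : ℝ) (hδ₁ : 0 < δ₁) (hδ : δ₁ ≤ δ₂)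
    (h1 : ((δ₁ : ℂ) • Q - 1).IsPositive)
    (h2 : ((1 : H →L[ℂ] H) - (δ₂ : ℂ) • P).IsPositive) :
    (adjoint A ∘L A - A ∘L adjoint A).IsPositive := by
  constructor
  · rw [← isSelfAdjoint_iff_isSymmetric]
    simp only [IsSelfAdjoint, star_eq_adjoint, map_sub, adjoint_comp, adjoint_adjoint]
  · intro x
    have key : ∀ y : H, ‖y‖ ^ 2 ≤ δ₁ * Complex.re ⟪Q y, y⟫_ℂ := by
      intro y
      have hh := h1.2 y
      simp only [reApplyInnerSelf, sub_apply, smul_apply, one_apply,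
        inner_sub_left, inner_smul_left, map_sub, map_mul, Complex.conj_ofReal,
        RCLike.re_to_complex, Complex.re_ofReal_mul] at hh
      change 0 ≤ _ - (⟪y, y⟫_ℂ).re at hh
      have hy : Complex.re ⟪y, y⟫_ℂ = ‖y‖ ^ 2 := inner_self_eq_norm_sq (𝕜 := ℂ) y
      nlinarith [hh, hy]
    have key2 : ∀ y : H, δ₂ * Complex.re ⟪P y, y⟫_ℂ ≤ ‖y‖ ^ 2 := by
      intro y
      have hh := h2.2 y
      simp only [reApplyInnerSelf, sub_apply, smul_apply, one_apply,
        inner_sub_left, inner_smul_left, map_sub, map_mul, Complex.conj_ofReal,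
        RCLike.re_to_complex, Complex.re_ofReal_mul] at hh
      change 0 ≤ (⟪y, y⟫_ℂ).re - _ at hh
      have hy : Complex.re ⟪y, y⟫_ℂ = ‖y‖ ^ 2 := inner_self_eq_norm_sq (𝕜 := ℂ) y
      nlinarith [hh, hy]
    have e1 : ⟪A (Q (adjoint A x)), x⟫_ℂ = ⟪Q (adjoint A x), adjoint A x⟫_ℂ :=
      (adjoint_inner_right A _ x).symm
    have e2 : ⟪adjoint A (P (A x)), x⟫_ℂ = ⟪P (A x), A x⟫_ℂ :=
      adjoint_inner_left _ _ _
    have heq : ⟪Q (adjoint A x), adjoint A x⟫_ℂ = ⟪P (A x), A x⟫_ℂ := by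
      have := congrArg (fun T : H →L[ℂ] H => ⟪T x, x⟫_ℂ) h
      simp only [comp_apply] at this
      rw [e1, e2] at this
      exact this
    have e3 : ⟪A (adjoint A x), x⟫_ℂ = ⟪adjoint A x, adjoint A x⟫_ℂ :=
      (adjoint_inner_right A _ x).symm
    have e4 : ⟪adjoint A (A x), x⟫_ℂ = ⟪A x, A x⟫_ℂ :=
      adjoint_inner_left _ _ _
    have hPA : 0 ≤ Complex.re ⟪P (A x), A x⟫_ℂ := by
      have := hP.2 (A x); simpa [reApplyInnerSelf] using this
    have hk := key (adjoint A x)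
    have hk2 := key2 (A x)
    rw [heq] at hk
    simp only [reApplyInnerSelf, sub_apply, comp_apply, inner_sub_left, map_sub]
    rw [e3, e4]
    simp only [RCLike.re_to_complex]
    have n1 : Complex.re ⟪A x, A x⟫_ℂ = ‖A x‖ ^ 2 := inner_self_eq_norm_sq (𝕜 := ℂ) _
    have n2 : Complex.re ⟪adjoint A x, adjoint A x⟫_ℂ = ‖adjoint A x‖ ^ 2 :=
      inner_self_eq_norm_sq (𝕜 := ℂ) _
    rw [n1, n2]
    nlinarith [hk, hk2, hPA]
end

section
/- For k ≥ 1 the generalized Cesàro operator C_k on ℓ² is hyponormal: C_k* C_k − C_k C_k* is a positive operator. -/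
open ContinuousLinearMap

open Finset Complex Filter
open scoped InnerProductSpace ENNReal

private theorem cesaro_swap_sum (c : ℕ → ℂ) (m : ℕ) :
    ∑ j ∈ range m, ∑ i ∈ Ico j m, c i = ∑ i ∈ range m, ((i:ℂ)+1) * c i := by
  induction m with
  | zero => simp
  | succ m ih =>
    have h1 : ∀ j ∈ range (m+1), ∑ i ∈ Ico j (m+1), c i = (∑ i ∈ Ico j m, c i) + c m := by
      intro j hj
      rw [Finset.sum_Ico_succ_top (Nat.lt_succ_iff.mp (mem_range.mp hj))]
    rw [Finset.sum_congr rfl h1, Finset.sum_add_distrib, Finset.sum_const,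
      Finset.sum_range_succ (fun j => ∑ i ∈ Ico j m, c i), Ico_self, sum_empty, add_zero, ih,
      Finset.sum_range_succ]
    rw [card_range, nsmul_eq_mul]
    push_cast
    ring

private theorem cesaro_normSq_sub_le (a b : ℂ) :
    normSq (a - b) ≤ 2 * normSq a + 2 * normSq b := by
  have h1 := norm_sub_le a b
  have h2 : normSq (a - b) = ‖a-b‖ ^ 2 := (Complex.sq_norm _).symm
  have h3 : normSq a = ‖a‖ ^ 2 := (Complex.sq_norm _).symm
  have h4 : normSq b = ‖b‖ ^ 2 := (Complex.sq_norm _).symm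
  have h5 : 0 ≤ ‖a‖ := norm_nonneg a
  have h6 : 0 ≤ ‖b‖ := norm_nonneg b
  have h7 : 0 ≤ ‖a - b‖ := norm_nonneg _
  rw [h2, h3, h4]
  nlinarith [h1, h5, h6, h7, sq_nonneg (‖a‖ - ‖b‖)]
private theorem cesaro_identity (k : ℝ) (hk : 1 ≤ k) (f : ℕ → ℂ) (n : ℕ) :
    ∑ j ∈ range n, normSq (∑ i ∈ Ico j n, f i / ((k:ℂ) + i))
      + (k - 1) * normSq (∑ i ∈ range n, f i / ((k:ℂ) + i))
    = ∑ i ∈ range n, (1/(k+i) - 1/(k+(i+1))) * normSq (∑ j ∈ range (i+1), f j)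
      + (1/(k+n)) * normSq (∑ j ∈ range n, f j) := by
  have hkr : ∀ i : ℕ, (0:ℝ) < k + i := fun i => by positivity
  have hne : ∀ i : ℕ, ((k:ℂ) + i) ≠ 0 := by
    intro i
    have : ((k:ℂ) + i) = ((k + i : ℝ) : ℂ) := by push_cast; ring
    rw [this]
    exact_mod_cast (hkr i).ne'
  set c : ℕ → ℂ := fun i => f i / ((k:ℂ) + i) with hc
  induction n with
  | zero => simp
  | succ n ih =>
    have h1 : ∀ j ∈ range (n+1), ∑ i ∈ Ico j (n+1), c i = (∑ i ∈ Ico j n, c i) + c n := by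
      intro j hj
      rw [Finset.sum_Ico_succ_top (Nat.lt_succ_iff.mp (mem_range.mp hj))]
    -- expand LHS first sum
    have e1 : ∑ j ∈ range (n+1), normSq (∑ i ∈ Ico j (n+1), c i)
        = ∑ j ∈ range n, normSq (∑ i ∈ Ico j n, c i)
          + (n+1) * normSq (c n)
          + 2 * ((∑ i ∈ range n, ((i:ℂ)+1) * c i) * (starRingEnd ℂ) (c n)).re := by
      rw [Finset.sum_congr rfl (fun j hj => by rw [h1 j hj])]
      simp only [normSq_add]
      rw [Finset.sum_add_distrib, Finset.sum_add_distrib, Finset.sum_const, card_range,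
        Finset.sum_range_succ (fun j => normSq (∑ i ∈ Ico j n, c i)), Ico_self, sum_empty,
        normSq_zero, add_zero, nsmul_eq_mul]
      have : ∑ j ∈ range (n+1), 2 * ((∑ i ∈ Ico j n, c i) * (starRingEnd ℂ) (c n)).re
          = 2 * ((∑ i ∈ range n, ((i:ℂ)+1) * c i) * (starRingEnd ℂ) (c n)).re := by
        rw [← Finset.mul_sum, ← Complex.re_sum, ← Finset.sum_mul,
          Finset.sum_range_succ (fun j => ∑ i ∈ Ico j n, c i), Ico_self, sum_empty, add_zero,
          cesaro_swap_sum]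
      rw [this]
      push_cast
      ring
    have e2 : ∑ i ∈ range (n+1), c i = (∑ i ∈ range n, c i) + c n := Finset.sum_range_succ c n
    have e3 : ∑ j ∈ range (n+1), f j = (∑ j ∈ range n, f j) + f n := Finset.sum_range_succ f n
    rw [e1, e2, Finset.sum_range_succ
      (fun i => (1/(k+i) - 1/(k+(i+1))) * normSq (∑ j ∈ range (i+1), f j)), e3]
    rw [normSq_add (∑ i ∈ range n, c i) (c n), normSq_add (∑ j ∈ range n, f j) (f n)]
    -- bridging facts
    have hcn : c n = f n / ((k:ℂ) + n) := rfl
    have hdc : ((k:ℂ) + n) = ((k + n : ℝ) : ℂ) := by push_cast; ring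
    have hb1 : normSq (c n) = normSq (f n) / ((k+n)*(k+n)) := by
      rw [hcn, normSq_div, hdc, normSq_ofReal]
    have b1 : ((n:ℝ)+1) * normSq (c n) + (k-1) * normSq (c n) = (1/(k+n)) * normSq (f n) := by
      rw [hb1]
      field_simp
      ring
    have key : (∑ i ∈ range n, ((i:ℂ)+1) * c i) + ((k:ℂ)-1) * (∑ i ∈ range n, c i)
        = ∑ i ∈ range n, f i := by
      rw [Finset.mul_sum, ← Finset.sum_add_distrib]
      refine Finset.sum_congr rfl fun i _ => ?_
      show ((i:ℂ)+1) * (f i / ((k:ℂ)+i)) + ((k:ℂ)-1) * (f i / ((k:ℂ)+i)) = f i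
      field_simp [hne i]
      ring
    have hconj : (starRingEnd ℂ) (c n) = (starRingEnd ℂ) (f n) / ((k:ℂ)+n) := by
      rw [hcn, map_div₀, hdc, Complex.conj_ofReal]
    have b2c : (∑ i ∈ range n, ((i:ℂ)+1) * c i) * (starRingEnd ℂ) (c n)
          + ((k:ℂ)-1) * ((∑ i ∈ range n, c i) * (starRingEnd ℂ) (c n))
        = ((∑ i ∈ range n, f i) * (starRingEnd ℂ) (f n)) / ((k+n : ℝ):ℂ) := by
      rw [← mul_assoc, ← add_mul, key, hconj, hdc]
      ring
    have b2 : ((∑ i ∈ range n, ((i:ℂ)+1) * c i) * (starRingEnd ℂ) (c n)).re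
          + (k-1) * ((∑ i ∈ range n, c i) * (starRingEnd ℂ) (c n)).re
        = (1/(k+n)) * ((∑ i ∈ range n, f i) * (starRingEnd ℂ) (f n)).re := by
      have := congrArg Complex.re b2c
      rw [Complex.add_re, Complex.div_ofReal_re] at this
      have hre : (((k:ℂ)-1) * ((∑ i ∈ range n, c i) * (starRingEnd ℂ) (c n))).re
          = (k-1) * ((∑ i ∈ range n, c i) * (starRingEnd ℂ) (c n)).re := by
        have : ((k:ℂ)-1) = ((k-1:ℝ):ℂ) := by push_cast; ring
        rw [this, Complex.re_ofReal_mul]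
      rw [hre] at this
      rw [this]
      field_simp
    push_cast
    push_cast at ih
    linear_combination ih + b1 + 2 * b2

private theorem cesaro_finite_ineq (k : ℝ) (hk : 1 ≤ k) (f : ℕ → ℂ) (m : ℕ) :
    ∑ j ∈ range m, normSq (∑ i ∈ Ico j m, f i / ((k:ℂ) + i))
      ≤ ∑ i ∈ range m, (1/(k+i))^2 * normSq (∑ j ∈ range (i+1), f j)
        + (1/(k+m)) * normSq (∑ j ∈ range m, f j) := by
  have hkr : ∀ i : ℕ, (0:ℝ) < k + i := fun i => by positivity
  have h1 : ∑ j ∈ range m, normSq (∑ i ∈ Ico j m, f i / ((k:ℂ) + i))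
      ≤ ∑ i ∈ range m, (1/(k+i) - 1/(k+(i+1))) * normSq (∑ j ∈ range (i+1), f j)
        + (1/(k+m)) * normSq (∑ j ∈ range m, f j) := by
    rw [← cesaro_identity k hk f m]
    have : 0 ≤ (k - 1) * normSq (∑ i ∈ range m, f i / ((k:ℂ) + i)) :=
      mul_nonneg (by linarith) (normSq_nonneg _)
    linarith
  refine h1.trans (add_le_add (Finset.sum_le_sum fun i _ => ?_) le_rfl)
  have hd : 1/(k+(i:ℝ)) - 1/(k+(i+1)) ≤ (1/(k+i))^2 := by
    have h2 := hkr i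
    have h3 : (0:ℝ) < k + i + 1 := by linarith
    have e0 : 1/(k+(i:ℝ)) - 1/(k+((i:ℝ)+1)) = 1/((k+i)*(k+i+1)) := by
      rw [div_sub_div _ _ h2.ne' (by linarith : (k+((i:ℝ)+1)) ≠ 0)]
      rw [div_eq_div_iff (by nlinarith) (by positivity)]
      ring
    have e1 : (1/(k+(i:ℝ)))^2 = 1/((k+i)*(k+i)) := by rw [div_pow, one_pow, sq]
    rw [e0, e1]
    apply one_div_le_one_div_of_le (by positivity)
    nlinarith [h2, h3]
  exact mul_le_mul_of_nonneg_right hd (normSq_nonneg _)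

private theorem cesaro_sq_summable : Summable (fun i : ℕ => (1/((i:ℝ)+1))^2) := by
  have h := Real.summable_one_div_nat_pow.mpr (le_refl 2)
  have h2 := (summable_nat_add_iff 1).mpr h
  refine h2.congr fun i => ?_
  push_cast
  rw [div_pow, one_pow]

private theorem cesaro_key_ineq (k : ℝ) (hk : 1 ≤ k) (f : ℕ → ℂ)
    (hf2 : Summable (fun i => normSq (f i)))
    (hF : Summable (fun i : ℕ => (1/(k+i))^2 * normSq (∑ j ∈ range (i+1), f j)))
    (n : ℕ) :
    ∑ j ∈ range n, normSq (∑' i : ℕ, (if j ≤ i then (1/((k:ℂ)+i)) else 0) * f i)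
      ≤ ∑' i : ℕ, (1/(k+i))^2 * normSq (∑ j ∈ range (i+1), f j) := by
  have hkr : ∀ i : ℕ, (0:ℝ) < k + i := fun i => by positivity
  have hk1 : ∀ i : ℕ, (1:ℝ) ≤ k + i := fun i => by
    have : (0:ℝ) ≤ i := Nat.cast_nonneg i
    linarith
  have hne : ∀ i : ℕ, ((k:ℂ) + i) ≠ 0 := by
    intro i
    have : ((k:ℂ) + i) = ((k + i : ℝ) : ℂ) := by push_cast; ring
    rw [this]
    exact_mod_cast (hkr i).ne'
  -- summability of the square coefficients
  have hsq : Summable (fun i : ℕ => (1/(k+(i:ℝ)))^2) := by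
    refine Summable.of_nonneg_of_le (fun i => by positivity) (fun i => ?_) cesaro_sq_summable
    have h1 : (0:ℝ) < (i:ℝ)+1 := by positivity
    have h2 : ((i:ℝ)+1) ≤ k + i := by linarith [hk]
    have := one_div_le_one_div_of_le h1 h2
    calc (1/(k+(i:ℝ)))^2 ≤ (1/((i:ℝ)+1))^2 := by
          apply pow_le_pow_left₀ (by positivity) this
      _ = _ := rfl
  -- summability of c i = f i / (k+i)
  have hcnorm : ∀ i : ℕ, ‖f i / ((k:ℂ)+i)‖ ≤ ((1/(k+(i:ℝ)))^2 + normSq (f i))/2 := by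
    intro i
    have e1 : ‖f i / ((k:ℂ)+i)‖ = ‖f i‖ * (1/(k+(i:ℝ))) := by
      rw [norm_div]
      have : ((k:ℂ) + i) = ((k + i : ℝ) : ℂ) := by push_cast; ring
      rw [this, Complex.norm_real, Real.norm_of_nonneg (hkr i).le, div_eq_mul_one_div]
    rw [e1]
    have e2 : normSq (f i) = ‖f i‖^2 := by
      rw [← Complex.sq_norm]
    rw [e2]
    nlinarith [sq_nonneg (‖f i‖ - 1/(k+(i:ℝ))), norm_nonneg (f i), (hkr i).le]
  have hcsum : Summable (fun i => f i / ((k:ℂ)+i)) := by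
    apply Summable.of_norm
    refine Summable.of_nonneg_of_le (fun i => norm_nonneg _) hcnorm ?_
    exact (hsq.add hf2).div_const 2
  -- summability of each tail summand family
  have hv : ∀ j : ℕ, Summable (fun i : ℕ => (if j ≤ i then (1/((k:ℂ)+i)) else 0) * f i) := by
    intro j
    apply Summable.of_norm
    refine Summable.of_nonneg_of_le (fun i => norm_nonneg _) (fun i => ?_)
      ((hsq.add hf2).div_const 2)
    by_cases h : j ≤ i
    · simp only [h, if_true]
      rw [one_div, inv_mul_eq_div]
      exact hcnorm i
    · simp only [h, if_false, zero_mul, norm_zero]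
      exact div_nonneg (add_nonneg (by positivity) (normSq_nonneg _)) (by norm_num)
  -- partial sums of the tails
  have hpartial : ∀ j m : ℕ,
      (∑ i ∈ range m, (if j ≤ i then (1/((k:ℂ)+i)) else 0) * f i)
        = ∑ i ∈ Ico j m, f i / ((k:ℂ)+i) := by
    intro j m
    rw [← Finset.sum_filter_add_sum_filter_not (range m) (fun i => j ≤ i)]
    have e1 : Finset.filter (fun i => j ≤ i) (range m) = Ico j m := by
      ext x
      simp [Finset.mem_filter, Finset.mem_range, Finset.mem_Ico, and_comm]
    rw [e1]
    have e2 : ∀ i ∈ Ico j m, (if j ≤ i then (1/((k:ℂ)+i)) else 0) * f i = f i / ((k:ℂ)+i) := by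
      intro i hi
      rw [if_pos (Finset.mem_Ico.mp hi).1, one_div, inv_mul_eq_div]
    have e3 : ∀ i ∈ Finset.filter (fun i => ¬ j ≤ i) (range m),
        (if j ≤ i then (1/((k:ℂ)+i)) else 0) * f i = 0 := by
      intro i hi
      rw [if_neg (Finset.mem_filter.mp hi).2, zero_mul]
    rw [Finset.sum_congr rfl e2, Finset.sum_congr rfl e3, Finset.sum_const_zero, add_zero]
  -- convergence of truncated quantities
  set u : ℕ → ℂ := fun j => ∑' i : ℕ, (if j ≤ i then (1/((k:ℂ)+i)) else 0) * f i with hu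
  have hGt : ∀ j : ℕ, Tendsto (fun m => ∑ i ∈ Ico j m, f i / ((k:ℂ)+i)) atTop (nhds (u j)) := by
    intro j
    have := (hv j).hasSum.tendsto_sum_nat
    refine this.congr fun m => hpartial j m
  have hP : Tendsto (fun m => ∑ j ∈ range n, normSq (∑ i ∈ Ico j m, f i / ((k:ℂ)+i)))
      atTop (nhds (∑ j ∈ range n, normSq (u j))) := by
    apply tendsto_finset_sum
    intro j _
    exact (Complex.continuous_normSq.tendsto (u j)).comp (hGt j)
  -- main bound
  set T := ∑' i : ℕ, (1/(k+(i:ℝ)))^2 * normSq (∑ j ∈ range (i+1), f j) with hT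
  refine le_of_forall_pos_le_add ?_
  intro ε hε
  -- frequently small tail term
  set y : ℕ → ℝ := fun m => (1/(k+(m:ℝ)))^2 * normSq (∑ j ∈ range (m+1), f j) + normSq (f m)
    with hy
  have hysum : Summable y := hF.add hf2
  have hynn : ∀ m, 0 ≤ y m := fun m =>
    add_nonneg (mul_nonneg (by positivity) (normSq_nonneg _)) (normSq_nonneg _)
  have hfreq : ∃ᶠ (m : ℕ) in atTop, (k+(m:ℝ)) * y m < ε/4 := by
    by_contra hcon
    rw [Filter.not_frequently] at hcon
    simp only [not_lt] at hcon
    obtain ⟨N, hN⟩ := Filter.eventually_atTop.mp hcon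
    have hbig : ∀ m : ℕ, N ≤ m → (ε/4) / (k*((m:ℝ)+1)) ≤ y m := by
      intro m hm
      have h1 := hN m hm
      have hpos : (0:ℝ) < k + m := hkr m
      have h2 : (ε/4) / (k+(m:ℝ)) ≤ y m := by
        rw [div_le_iff₀ hpos]
        linarith [h1]
      refine le_trans ?_ h2
      gcongr
      nlinarith [Nat.cast_nonneg (α := ℝ) m, hk]
    have hsum0 : Summable (fun m : ℕ => (ε/4) / (k*((m:ℝ)+1))) := by
      refine (summable_nat_add_iff N).mp ?_
      refine Summable.of_nonneg_of_le (fun m => by positivity) (fun m => ?_)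
        ((summable_nat_add_iff N).mpr hysum)
      exact hbig (m+N) (Nat.le_add_left N m)
    have hsum1 : Summable (fun m : ℕ => 1/((m:ℝ)+1)) := by
      have hne0 : (ε/4)/k ≠ 0 := by positivity
      have hk0 : (0:ℝ) < k := by linarith
      have hm1 : ∀ m : ℕ, ((m:ℝ)+1) ≠ 0 := fun m => by positivity
      refine (summable_mul_left_iff hne0).mp (hsum0.congr fun m => ?_)
      field_simp
      try (left; ring)
    have hnot : ¬ Summable (fun m : ℕ => 1/((m:ℝ)+1)) := by
      intro h
      apply Real.not_summable_one_div_natCast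
      refine (summable_nat_add_iff 1).mp (h.congr fun m => ?_)
      push_cast
      ring_nf
    exact hnot hsum1
  obtain ⟨N, hdist⟩ := Metric.tendsto_atTop.mp hP (ε/2) (half_pos hε)
  obtain ⟨m, hm, hsmall⟩ := Filter.frequently_atTop.mp hfreq (max n N)
  have hmn : n ≤ m := le_trans (le_max_left _ _) hm
  have hmN : N ≤ m := le_trans (le_max_right _ _) hm
  have h1 := hdist m hmN
  rw [Real.dist_eq, abs_sub_lt_iff] at h1
  have h2 : ∑ j ∈ range n, normSq (u j)
      ≤ ∑ j ∈ range n, normSq (∑ i ∈ Ico j m, f i / ((k:ℂ)+i)) + ε/2 := by linarith [h1.2]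
  have h3 : ∑ j ∈ range n, normSq (∑ i ∈ Ico j m, f i / ((k:ℂ)+i))
      ≤ ∑ j ∈ range m, normSq (∑ i ∈ Ico j m, f i / ((k:ℂ)+i)) :=
    Finset.sum_le_sum_of_subset_of_nonneg (Finset.range_subset_range.mpr hmn)
      (fun _ _ _ => normSq_nonneg _)
  have h4 := cesaro_finite_ineq k hk f m
  have h5 : ∑ i ∈ range m, (1/(k+(i:ℝ)))^2 * normSq (∑ j ∈ range (i+1), f j) ≤ T :=
    Summable.sum_le_tsum (range m) (fun i _ => mul_nonneg (by positivity) (normSq_nonneg _)) hF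
  have h6 : (1/(k+(m:ℝ))) * normSq (∑ j ∈ range m, f j) ≤ 2*((k+(m:ℝ)) * y m) := by
    have hKpos : (0:ℝ) < k + m := hkr m
    have hK1 : (1:ℝ) ≤ k + m := hk1 m
    have hSm : (∑ j ∈ range m, f j) = (∑ j ∈ range (m+1), f j) - f m := by
      rw [Finset.sum_range_succ]
      ring
    have hsub : normSq (∑ j ∈ range m, f j)
        ≤ 2 * normSq (∑ j ∈ range (m+1), f j) + 2 * normSq (f m) := by
      rw [hSm]
      exact cesaro_normSq_sub_le _ _
    have hinvle : 1/(k+(m:ℝ)) ≤ k + m := by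
      rw [div_le_iff₀ hKpos]
      nlinarith
    have expand : 2*((k+(m:ℝ)) * y m)
        = 2*((1/(k+(m:ℝ))) * normSq (∑ j ∈ range (m+1), f j)) + 2*((k+(m:ℝ)) * normSq (f m)) := by
      rw [hy]
      field_simp
    rw [expand]
    have hmul := mul_le_mul_of_nonneg_left hsub (le_of_lt (one_div_pos.mpr hKpos))
    have hmul2 := mul_le_mul_of_nonneg_right hinvle (normSq_nonneg (f m))
    nlinarith [hmul, hmul2]
  have h7 : 2*((k+(m:ℝ)) * y m) < ε/2 := by linarith [hsmall]
  linarith [h2, h3, h4, h5, h6, h7]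

open ContinuousLinearMap

/-- For k ≥ 1, the generalized Cesàro operator C_k on ℓ², given by
(C_k f)(i) = (1/(k+i)) Σ_{j=0}^{i} f(j), is hyponormal:
C_k* C_k − C_k C_k* is a positive operator. -/
theorem cesaro_hyponormal (k : ℝ) (hk : 1 ≤ k)
    (C : lp (fun _ : ℕ => ℂ) 2 →L[ℂ] lp (fun _ : ℕ => ℂ) 2)
    (hC : ∀ f : lp (fun _ : ℕ => ℂ) 2, ∀ i : ℕ,
      C f i = (∑ j ∈ Finset.range (i + 1), f j) / ((k : ℂ) + (i : ℂ))) :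
    (adjoint C ∘L C - C ∘L adjoint C).IsPositive := by
  have hkr : ∀ i : ℕ, (0:ℝ) < k + i := fun i => by positivity
  -- the component formula for the adjoint
  have hadj : ∀ (f : lp (fun _ : ℕ => ℂ) 2) (j : ℕ),
      adjoint C f j = ∑' i : ℕ, (if j ≤ i then (1/((k:ℂ)+i)) else 0) * f i := by
    intro f j
    have h1 : adjoint C f j = ⟪lp.single 2 j (1:ℂ), adjoint C f⟫_ℂ := by
      rw [lp.inner_eq_tsum]
      rw [tsum_eq_single j]
      · rw [lp.single_apply_self, RCLike.inner_apply, map_one, mul_one]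
      · intro i hij
        rw [lp.single_apply_ne 2 j _ hij, inner_zero_left]
    rw [h1, adjoint_inner_right, lp.inner_eq_tsum]
    congr 1
    funext i
    rw [RCLike.inner_apply, hC]
    have h2 : ∑ m ∈ Finset.range (i+1), lp.single 2 j (1:ℂ) m = if j ≤ i then 1 else 0 := by
      simp [lp.single_apply, Finset.sum_dite_eq', Nat.lt_succ_iff]
    rw [h2]
    have h3 : ((if j ≤ i then (1:ℂ) else 0) / ((k:ℂ)+i))
        = (((if j ≤ i then (1:ℝ) else 0) / (k+i) : ℝ) : ℂ) := by
      push_cast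
      split <;> simp
    rw [h3, Complex.conj_ofReal, ← h3]
    split <;> simp [mul_comm]
  rw [isPositive_def']
  constructor
  · -- self-adjointness
    rw [IsSelfAdjoint, star_sub, star_eq_adjoint, star_eq_adjoint, adjoint_comp, adjoint_comp,
      adjoint_adjoint]
  · intro x
    rw [ContinuousLinearMap.reApplyInnerSelf_apply, ContinuousLinearMap.sub_apply,
      ContinuousLinearMap.comp_apply, ContinuousLinearMap.comp_apply, inner_sub_left, map_sub]
    have e1 : RCLike.re (⟪adjoint C (C x), x⟫_ℂ) = ‖C x‖^2 := by
      rw [adjoint_inner_left, inner_self_eq_norm_sq]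
    have e2 : RCLike.re (⟪C (adjoint C x), x⟫_ℂ) = ‖adjoint C x‖^2 := by
      conv_lhs => rw [← adjoint_adjoint C]
      rw [adjoint_inner_left, adjoint_adjoint, inner_self_eq_norm_sq]
    rw [e1, e2, sub_nonneg]
    -- reduce to the key inequality
    have hnorm_sq : ∀ g : lp (fun _ : ℕ => ℂ) 2, ‖g‖^2 = ∑' i : ℕ, normSq (g i) := by
      intro g
      have h := lp.norm_rpow_eq_tsum (p := 2) (by norm_num) g
      have h2 : ((2:ℝ≥0∞)).toReal = (2:ℝ) := by norm_num
      rw [h2] at h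
      have h3 : ‖g‖ ^ (2:ℝ) = ‖g‖^2 := by
        rw [show (2:ℝ) = ((2:ℕ):ℝ) by norm_num, Real.rpow_natCast]
      rw [h3] at h
      rw [h]
      congr 1
      funext i
      rw [show (2:ℝ) = ((2:ℕ):ℝ) by norm_num, Real.rpow_natCast, ← Complex.sq_norm]
    have hsummable_sq : ∀ g : lp (fun _ : ℕ => ℂ) 2, Summable (fun i : ℕ => normSq (g i)) := by
      intro g
      have h := (lp.memℓp g).summable (by norm_num : (0:ℝ) < (2:ℝ≥0∞).toReal)
      refine h.congr fun i => ?_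
      have h2 : ((2:ℝ≥0∞)).toReal = (2:ℝ) := by norm_num
      rw [h2, show (2:ℝ) = ((2:ℕ):ℝ) by norm_num, Real.rpow_natCast, ← Complex.sq_norm]
    have hCx : ∀ i : ℕ, normSq (C x i)
        = (1/(k+(i:ℝ)))^2 * normSq (∑ j ∈ Finset.range (i+1), x j) := by
      intro i
      rw [hC]
      have hcast : ((k:ℂ) + i) = ((k + i : ℝ) : ℂ) := by push_cast; ring
      rw [hcast, normSq_div, normSq_ofReal]
      rw [div_eq_mul_one_div, mul_comm]
      congr 1
      rw [div_pow, one_pow, sq]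
    have hF : Summable (fun i : ℕ =>
        (1/(k+(i:ℝ)))^2 * normSq (∑ j ∈ Finset.range (i+1), x j)) :=
      (hsummable_sq (C x)).congr fun i => hCx i
    have key := fun n => cesaro_key_ineq k hk (fun i => x i) (hsummable_sq x) hF n
    have hub : ∑' j : ℕ, normSq (adjoint C x j)
        ≤ ∑' i : ℕ, (1/(k+(i:ℝ)))^2 * normSq (∑ j ∈ Finset.range (i+1), x j) := by
      refine Real.tsum_le_of_sum_range_le (fun j => normSq_nonneg _) fun n => ?_
      calc ∑ j ∈ Finset.range n, normSq (adjoint C x j)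
          = ∑ j ∈ Finset.range n,
              normSq (∑' i : ℕ, (if j ≤ i then (1/((k:ℂ)+i)) else 0) * x i) := by
            exact Finset.sum_congr rfl fun j _ => by rw [hadj x j]
        _ ≤ _ := key n
    calc ‖adjoint C x‖^2 = ∑' j : ℕ, normSq (adjoint C x j) := hnorm_sq _
      _ ≤ ∑' i : ℕ, (1/(k+(i:ℝ)))^2 * normSq (∑ j ∈ Finset.range (i+1), x j) := hub
      _ = ∑' i : ℕ, normSq (C x i) := by
            exact tsum_congr fun i => (hCx i).symm
      _ = ‖C x‖^2 := (hnorm_sq _).symm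
end

section
/- For every k > 0, the generalized Cesàro operator C_k on ℓ² satisfies C_k Q C_k* = C_k* P C_k, where Q = diag{k,1,1,1,...} and P = diag{(k+i)/(k+i+1) : i ≥ 0}. -/
open Filter Topology ContinuousLinearMap

lemma tele_real (c : ℝ) (hc : 0 < c) :
    HasSum (fun n : ℕ => 1 / ((c + n) * (c + n + 1))) (1 / c) := by
  have hpos : ∀ n : ℕ, (0:ℝ) < c + n := fun n => by positivity
  rw [hasSum_iff_tendsto_nat_of_nonneg (fun n => by positivity)]
  have hps : ∀ n : ℕ, ∑ i ∈ Finset.range n, 1 / ((c + i) * (c + i + 1))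
      = 1 / c - 1 / (c + n) := by
    intro n
    have h := Finset.sum_range_sub' (f := fun i : ℕ => 1 / (c + i)) n
    simp only [Nat.cast_zero, add_zero] at h
    rw [← h]
    refine Finset.sum_congr rfl fun i _ => ?_
    have h1 : (0:ℝ) < c + i := hpos i
    have h2 : (0:ℝ) < c + i + 1 := by linarith
    push_cast
    rw [← add_assoc, div_sub_div _ _ h1.ne' h2.ne']
    congr 1
    ring
  simp only [hps]
  have h0 : Tendsto (fun n : ℕ => 1 / (c + (n:ℝ))) atTop (𝓝 0) := by
    simpa [one_div, Pi.inv_def] using (tendsto_atTop_add_const_left atTop c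
      tendsto_natCast_atTop_atTop).inv_tendsto_atTop
  simpa using tendsto_const_nhds.sub h0

lemma tele_complex (k : ℝ) (hk : 0 < k) (M : ℕ) :
    HasSum (fun i : ℕ => if M ≤ i then 1 / (((k:ℂ) + i) * ((k:ℂ) + i + 1)) else 0)
      (1 / ((k:ℂ) + M)) := by
  set f : ℕ → ℂ := fun i => if M ≤ i then 1 / (((k:ℂ) + i) * ((k:ℂ) + i + 1)) else 0 with hf
  have hshift : HasSum (fun n : ℕ => f (n + M)) (1 / ((k:ℂ) + M)) := by
    have hr : HasSum (fun n : ℕ => ((1 / ((k + M + n) * (k + M + n + 1)) : ℝ) : ℂ))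
        ((1 / (k + M) : ℝ) : ℂ) :=
      Complex.hasSum_ofReal.2 (tele_real (k + M) (by positivity))
    have he : (fun n : ℕ => f (n + M))
        = fun n : ℕ => ((1 / ((k + M + n) * (k + M + n + 1)) : ℝ) : ℂ) := by
      funext n
      rw [hf]
      simp only [if_pos (Nat.le_add_left M n)]
      push_cast
      ring_nf
    rw [he]
    convert hr using 2
    push_cast
    ring
  have hz : ∑ i ∈ Finset.range M, f i = 0 :=
    Finset.sum_eq_zero fun i hi => if_neg (Nat.not_le.2 (Finset.mem_range.1 hi))
  simpa [hz] using (hasSum_nat_add_iff (f := f) M).1 hshift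

set_option maxHeartbeats 1000000 in
/-- For k > 0, C_k Q C_k* = C_k* P C_k where Q = diag{k,1,1,...} and
P = diag{(k+i)/(k+i+1)}. -/
theorem cesaro_interrupter_identity (k : ℝ) (hk : 0 < k)
    (C Q P : lp (fun _ : ℕ => ℂ) 2 →L[ℂ] lp (fun _ : ℕ => ℂ) 2)
    (hC : ∀ f : lp (fun _ : ℕ => ℂ) 2, ∀ i : ℕ,
      C f i = (∑ j ∈ Finset.range (i + 1), f j) / ((k : ℂ) + (i : ℂ)))
    (hQ : ∀ f : lp (fun _ : ℕ => ℂ) 2, ∀ i : ℕ,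
      Q f i = (if i = 0 then (k : ℂ) else 1) * f i)
    (hP : ∀ f : lp (fun _ : ℕ => ℂ) 2, ∀ i : ℕ,
      P f i = (((k : ℂ) + (i : ℂ)) / ((k : ℂ) + (i : ℂ) + 1)) * f i) :
    C ∘L Q ∘L adjoint C = adjoint C ∘L P ∘L C := by
  classical
  have hcast : ∀ i : ℕ, ((k:ℂ) + (i:ℂ)) = (((k + i : ℝ)) : ℂ) := fun i => by push_cast; ring
  have hkC : ∀ i : ℕ, ((k:ℂ) + (i:ℂ)) ≠ 0 := by
    intro i
    rw [hcast i]
    exact_mod_cast (by positivity : (0:ℝ) < k + i).ne'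
  have hkC1 : ∀ i : ℕ, ((k:ℂ) + (i:ℂ) + 1) ≠ 0 := by
    intro i
    have : ((k:ℂ) + (i:ℂ) + 1) = (((k + i + 1 : ℝ)) : ℂ) := by push_cast; ring
    rw [this]
    exact_mod_cast (by positivity : (0:ℝ) < k + i + 1).ne'
  -- adjoint of C on singles
  have hadj : ∀ (m : ℕ) (a : ℂ), adjoint C (lp.single 2 m a)
      = ∑ j ∈ Finset.range (m+1), lp.single 2 j (a / ((k:ℂ) + m)) := by
    intro m a
    refine (ext_inner_left ℂ fun w => ?_).symm
    rw [adjoint_inner_right, lp.inner_single_right, inner_sum]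
    simp only [lp.inner_single_right, RCLike.inner_apply, hC w m]
    rw [map_div₀, map_sum]
    have : (starRingEnd ℂ) ((k:ℂ) + (m:ℂ)) = (k:ℂ) + (m:ℂ) := by
      simp [map_add, Complex.conj_ofReal]
    rw [this, Finset.sum_div, Finset.mul_sum]
    refine Finset.sum_congr rfl fun j _ => ?_
    ring
  -- components of adjoint C on singles
  have hadj' : ∀ (m : ℕ) (a : ℂ) (j : ℕ), (adjoint C (lp.single 2 m a)) j
      = if j ≤ m then a / ((k:ℂ) + m) else 0 := by
    intro m a j
    rw [hadj]
    have := congrFun (lp.coeFn_sum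
      (fun j' : ℕ => lp.single 2 j' (a / ((k:ℂ) + m))) (Finset.range (m+1))) j
    rw [this]
    simp [lp.single_apply, Finset.sum_dite_eq, Nat.lt_succ_iff]
  -- components of C on singles
  have hCe : ∀ (m : ℕ) (a : ℂ) (i : ℕ), (C (lp.single 2 m a)) i
      = if m ≤ i then a / ((k:ℂ) + i) else 0 := by
    intro m a i
    rw [hC]
    have : ∑ j ∈ Finset.range (i+1), (lp.single 2 m a : ∀ _ : ℕ, ℂ) j
        = if m ≤ i then a else 0 := by
      simp [lp.single_apply, Finset.sum_dite_eq', Nat.lt_succ_iff]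
    rw [this]
    split_ifs <;> simp
  -- LHS on singles
  have hL : ∀ (m : ℕ) (a : ℂ) (i : ℕ), (C (Q (adjoint C (lp.single 2 m a)))) i
      = a / ((k:ℂ) + (max i m : ℕ)) := by
    intro m a i
    set N := min i m with hN
    rw [hC]
    have hnum : ∑ j ∈ Finset.range (i+1), (Q (adjoint C (lp.single 2 m a))) j
        = ((k:ℂ) + (N:ℂ)) * (a / ((k:ℂ) + m)) := by
      have hterm : ∀ j ∈ Finset.range (i+1), (Q (adjoint C (lp.single 2 m a))) j
          = if j ≤ N then (if j = 0 then (k:ℂ) else 1) * (a / ((k:ℂ) + m)) else 0 := by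
        intro j hj
        have hji : j ≤ i := Nat.lt_succ_iff.1 (Finset.mem_range.1 hj)
        rw [hQ, hadj']
        by_cases hjm : j ≤ m
        · rw [if_pos hjm, if_pos (le_min hji hjm)]
        · rw [if_neg hjm, if_neg (fun h : j ≤ N => hjm (h.trans (min_le_right i m))), mul_zero]
      rw [Finset.sum_congr rfl hterm]
      have hsub : Finset.range (N+1) ⊆ Finset.range (i+1) := by
        apply Finset.range_subset_range.2; omega
      rw [← Finset.sum_subset hsub (fun j _ hj =>
        if_neg (fun h => hj (Finset.mem_range.2 (Nat.lt_succ_of_le h))))]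
      have : ∀ j ∈ Finset.range (N+1),
          (if j ≤ N then (if j = 0 then (k:ℂ) else 1) * (a / ((k:ℂ) + m)) else 0)
          = (if j = 0 then (k:ℂ) else 1) * (a / ((k:ℂ) + m)) := by
        intro j hj
        rw [if_pos (Nat.lt_succ_iff.1 (Finset.mem_range.1 hj))]
      rw [Finset.sum_congr rfl this, ← Finset.sum_mul]
      congr 1
      induction N with
      | zero => simp
      | succ n ih =>
        rw [Finset.sum_range_succ, ih, if_neg (Nat.succ_ne_zero n)]
        push_cast
        ring
    rw [hnum]
    rcases le_total i m with h | h
    · rw [hN, min_eq_left h, max_eq_right h, mul_comm, mul_div_assoc, div_self (hkC i), mul_one]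
    · rw [hN, min_eq_right h, max_eq_left h, mul_comm ((k:ℂ) + (m:ℂ)), div_mul_eq_mul_div,
        mul_div_assoc a, div_self (hkC m), mul_one]
  -- RHS on singles
  have hR : ∀ (m : ℕ) (a : ℂ) (j : ℕ), (adjoint C (P (C (lp.single 2 m a)))) j
      = a / ((k:ℂ) + (max j m : ℕ)) := by
    intro m a j
    have hcomp : (adjoint C (P (C (lp.single 2 m a)))) j
        = inner (𝕜 := ℂ) (lp.single 2 j (1:ℂ)) (adjoint C (P (C (lp.single 2 m a)))) := by
      rw [lp.inner_single_left]
      simp [RCLike.inner_apply]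
    rw [hcomp, adjoint_inner_right, lp.inner_eq_tsum]
    have hterm : ∀ i : ℕ, (inner ℂ ((C (lp.single 2 j (1:ℂ))) i) ((P (C (lp.single 2 m a))) i) : ℂ)
        = a * (if max j m ≤ i then 1 / (((k:ℂ) + i) * ((k:ℂ) + i + 1)) else 0) := by
      intro i
      rw [RCLike.inner_apply, hCe, hP, hCe]
      by_cases h1 : j ≤ i <;> by_cases h2 : m ≤ i
      · rw [if_pos h1, if_pos h2, if_pos (max_le h1 h2)]
        have hc : (starRingEnd ℂ) ((1:ℂ) / ((k:ℂ) + i)) = 1 / ((k:ℂ) + i) := by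
          simp [map_div₀, map_add, Complex.conj_ofReal]
        rw [hc]
        field_simp [hkC i, hkC1 i]
      · rw [if_pos h1, if_neg h2, if_neg (fun h => h2 ((le_max_right j m).trans h))]
        simp
      · rw [if_neg h1, if_neg (fun h => h1 ((le_max_left j m).trans h))]
        simp
      · rw [if_neg h1, if_neg (fun h => h1 ((le_max_left j m).trans h))]
        simp
    rw [tsum_congr hterm]
    have hs := (tele_complex k hk (max j m)).mul_left a
    rw [hs.tsum_eq, mul_one_div]
  -- equality on singles
  have hsingle : ∀ (m : ℕ) (a : ℂ), (C ∘L Q ∘L adjoint C) (lp.single 2 m a)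
      = (adjoint C ∘L P ∘L C) (lp.single 2 m a) := by
    intro m a
    refine lp.ext (funext fun i => ?_)
    simp only [ContinuousLinearMap.comp_apply]
    rw [hL m a i, hR m a i]
  -- conclude by density
  refine ContinuousLinearMap.ext fun f => ?_
  have h1 := (lp.hasSum_single (E := fun _ : ℕ => ℂ) (by norm_num) f).mapL (C ∘L Q ∘L adjoint C)
  have h2 := (lp.hasSum_single (E := fun _ : ℕ => ℂ) (by norm_num) f).mapL (adjoint C ∘L P ∘L C)
  rw [show (fun i => (C ∘L Q ∘L adjoint C) (lp.single 2 i (f i)))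
      = (fun i => (adjoint C ∘L P ∘L C) (lp.single 2 i (f i)))
    from funext fun i => hsingle i (f i)] at h1
  exact h1.unique h2
end

section
/- Every injective unilateral weighted shift W on ℓ² (with all weights nonzero) is supraposinormal: there exist positive operators Q, P, with Q injective with dense range, such that W Q W* = W* P W. Explicitly one may take Q = diag{|w₁|², |w₂|², |w₃|², ...} and P = diag{1, 0, |w₀|², |w₁|², ...}. -/
open ContinuousLinearMap
open scoped ENNReal

set_option maxHeartbeats 1000000
noncomputable section

local notation "H" => lp (fun _ : ℕ => ℂ) 2

lemma memℓp_diag {d : ℕ → ℝ} {C : ℝ} (hd : ∀ n, |d n| ≤ C) (f : H) :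
    Memℓp (fun n => (d n : ℂ) * f n) 2 := by
  apply memℓp_gen
  have hs : Summable (fun n => ‖f n‖ ^ (2 : ℝ≥0∞).toReal) :=
    (lp.memℓp f).summable (by norm_num)
  refine Summable.of_nonneg_of_le (fun n => ?_) (fun n => ?_) (hs.mul_left (C ^ 2))
  · positivity
  · have h2 : ((2 : ℝ≥0∞)).toReal = ((2 : ℕ) : ℝ) := by norm_num
    rw [h2, Real.rpow_natCast, Real.rpow_natCast]
    have : ‖(d n : ℂ) * f n‖ = |d n| * ‖f n‖ := by
      simp [Complex.norm_real, abs_mul]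
    rw [this, mul_pow]
    have hdn : |d n| ^ 2 ≤ C ^ 2 := by
      have := hd n
      have := abs_nonneg (d n)
      nlinarith
    nlinarith [sq_nonneg ‖f n‖, norm_nonneg (f n)]

/-- diagonal operator with real diagonal `d` bounded by `C`. -/
def diagOp (d : ℕ → ℝ) (C : ℝ) (hC : 0 ≤ C) (hd : ∀ n, |d n| ≤ C) : H →L[ℂ] H :=
  LinearMap.mkContinuous
    { toFun := fun f => ⟨fun n => (d n : ℂ) * f n, memℓp_diag hd f⟩
      map_add' := fun f g => lp.ext <| funext fun n => by
        show (d n : ℂ) * (f + g) n = _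
        rw [lp.coeFn_add]
        show (d n : ℂ) * (f n + g n) = (d n : ℂ) * f n + (d n : ℂ) * g n
        ring
      map_smul' := fun c f => lp.ext <| funext fun n => by
        show (d n : ℂ) * (c • f) n = (c • (⟨fun n => (d n : ℂ) * f n, memℓp_diag hd f⟩ : H)) n
        rw [lp.coeFn_smul, lp.coeFn_smul]
        show (d n : ℂ) * (c * f n) = c * ((d n : ℂ) * f n)
        ring }
    C
    (fun f => by
      refine lp.norm_le_of_forall_sum_le (by norm_num) (mul_nonneg hC (norm_nonneg f)) ?_
      intro s
      have h2 : ((2 : ℝ≥0∞)).toReal = ((2 : ℕ) : ℝ) := by norm_num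
      calc ∑ i ∈ s, ‖(fun n => (d n : ℂ) * f n) i‖ ^ (2 : ℝ≥0∞).toReal
          ≤ ∑ i ∈ s, C ^ 2 * ‖f i‖ ^ (2 : ℝ≥0∞).toReal := by
            refine Finset.sum_le_sum fun i _ => ?_
            rw [h2, Real.rpow_natCast, Real.rpow_natCast]
            have : ‖(d i : ℂ) * f i‖ = |d i| * ‖f i‖ := by
              simp [Complex.norm_real, abs_mul]
            rw [this, mul_pow]
            have hdn : |d i| ^ 2 ≤ C ^ 2 := by
              have := hd i
              have := abs_nonneg (d i)
              nlinarith
            nlinarith [sq_nonneg ‖f i‖, norm_nonneg (f i)]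
        _ = C ^ 2 * ∑ i ∈ s, ‖f i‖ ^ (2 : ℝ≥0∞).toReal := by rw [Finset.mul_sum]
        _ ≤ C ^ 2 * ‖f‖ ^ (2 : ℝ≥0∞).toReal := by
            have := lp.sum_rpow_le_norm_rpow (p := 2) (by norm_num) f s
            gcongr
        _ = (C * ‖f‖) ^ (2 : ℝ≥0∞).toReal := by
            rw [h2, Real.rpow_natCast, Real.rpow_natCast, mul_pow])

@[simp] lemma diagOp_apply (d : ℕ → ℝ) (C : ℝ) (hC : 0 ≤ C) (hd : ∀ n, |d n| ≤ C)
    (f : H) (n : ℕ) : (diagOp d C hC hd) f n = (d n : ℂ) * f n := rfl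

open scoped InnerProductSpace ComplexConjugate

lemma diagOp_isSelfAdjoint (d : ℕ → ℝ) (C : ℝ) (hC : 0 ≤ C) (hd : ∀ n, |d n| ≤ C) :
    IsSelfAdjoint (diagOp d C hC hd) := by
  rw [ContinuousLinearMap.isSelfAdjoint_iff_isSymmetric]
  intro f g
  rw [lp.inner_eq_tsum, lp.inner_eq_tsum]
  refine tsum_congr fun n => ?_
  show ⟪(diagOp d C hC hd f : H) n, g n⟫_ℂ = ⟪f n, (diagOp d C hC hd g : H) n⟫_ℂ
  rw [diagOp_apply, diagOp_apply, RCLike.inner_apply, RCLike.inner_apply]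
  rw [map_mul, Complex.conj_ofReal]
  ring

lemma diagOp_isPositive (d : ℕ → ℝ) (C : ℝ) (hC : 0 ≤ C) (hd : ∀ n, |d n| ≤ C)
    (hd0 : ∀ n, 0 ≤ d n) : (diagOp d C hC hd).IsPositive := by
  refine ⟨ContinuousLinearMap.isSelfAdjoint_iff_isSymmetric.mp (diagOp_isSelfAdjoint d C hC hd), fun f => ?_⟩
  rw [ContinuousLinearMap.reApplyInnerSelf, lp.inner_eq_tsum]
  have hmap := (RCLike.reCLM (K := ℂ)).map_tsum
    (lp.summable_inner (𝕜 := ℂ) (diagOp d C hC hd f) f)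
  simp only [RCLike.reCLM_apply] at hmap
  rw [hmap]
  refine tsum_nonneg fun n => ?_
  show 0 ≤ RCLike.re ⟪(diagOp d C hC hd f : H) n, f n⟫_ℂ
  rw [diagOp_apply, RCLike.inner_apply]
  have heq : (starRingEnd ℂ) ((d n : ℂ) * f n) * f n
      = (RCLike.ofReal (d n * ‖f n‖ ^ 2) : ℂ) := by
    rw [map_mul, Complex.conj_ofReal, mul_assoc, RCLike.conj_mul, RCLike.ofReal_mul,
      RCLike.ofReal_pow]
    norm_num
  rw [mul_comm _ ((starRingEnd ℂ) _), heq, RCLike.ofReal_re]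
  exact mul_nonneg (hd0 n) (sq_nonneg _)

lemma diagOp_injective (d : ℕ → ℝ) (C : ℝ) (hC : 0 ≤ C) (hd : ∀ n, |d n| ≤ C)
    (hd0 : ∀ n, d n ≠ 0) : Function.Injective (diagOp d C hC hd) := by
  intro f g h
  refine lp.ext (funext fun n => ?_)
  have h1 : (diagOp d C hC hd f : H) n = (diagOp d C hC hd g : H) n := by rw [h]
  rw [diagOp_apply, diagOp_apply] at h1
  exact mul_left_cancel₀ (by exact_mod_cast hd0 n) h1

lemma denseRange_of_injective_isSelfAdjoint (T : H →L[ℂ] H) (hT : IsSelfAdjoint T)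
    (hinj : Function.Injective T) : DenseRange T := by
  have hsymm := (ContinuousLinearMap.isSelfAdjoint_iff_isSymmetric).mp hT
  have horth : (LinearMap.range (T : H →ₗ[ℂ] H) : Submodule ℂ H)ᗮ = ⊥ := by
    rw [Submodule.eq_bot_iff]
    intro x hx
    have hTx : T x = 0 := by
      rw [← inner_self_eq_zero (𝕜 := ℂ)]
      have h0 : ⟪T (T x), x⟫_ℂ = 0 := by
        refine Submodule.inner_right_of_mem_orthogonal ?_ hx
        exact LinearMap.mem_range_self _ _
      calc ⟪T x, T x⟫_ℂ = ⟪x, T (T x)⟫_ℂ := hsymm x (T x)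
        _ = (starRingEnd ℂ) ⟪T (T x), x⟫_ℂ := (inner_conj_symm _ _).symm
        _ = 0 := by rw [h0, map_zero]
    exact hinj (by rw [hTx, map_zero])
  have htop : (LinearMap.range (T : H →ₗ[ℂ] H) : Submodule ℂ H).topologicalClosure = ⊤ := by
    rw [Submodule.topologicalClosure_eq_top_iff, horth]
  have hdense : Dense ((LinearMap.range (T : H →ₗ[ℂ] H) : Submodule ℂ H) : Set H) :=
    Submodule.dense_iff_topologicalClosure_eq_top.mpr htop
  rwa [show ((LinearMap.range (T : H →ₗ[ℂ] H) : Submodule ℂ H) : Set H) = Set.range T from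
    LinearMap.coe_range _] at hdense

section Shift

variable {w : ℕ → ℂ} {W : H →L[ℂ] H}

lemma W_single (hW0 : ∀ f : H, W f 0 = 0) (hWs : ∀ f : H, ∀ n, W f (n + 1) = w n * f n)
    (n : ℕ) : W (lp.single 2 n (1 : ℂ)) = w n • lp.single 2 (n + 1) (1 : ℂ) := by
  refine lp.ext (funext fun k => ?_)
  have hsmul : ∀ k, (w n • lp.single 2 (n + 1) (1 : ℂ) : H) k
      = w n * (lp.single 2 (n + 1) (1 : ℂ) : H) k := by
    intro k
    rw [lp.coeFn_smul]
    rfl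
  match k with
  | 0 =>
    rw [hW0, hsmul, lp.single_apply_ne 2 (n + 1) _ (by omega)]
    ring
  | k + 1 =>
    rw [hWs, hsmul, lp.single_apply, lp.single_apply]
    by_cases h : k = n
    · subst h
      simp
    · rw [Pi.single_eq_of_ne h, Pi.single_eq_of_ne (by omega)]
      ring

lemma apply_eq_inner_single (f : H) (n : ℕ) : f n = ⟪lp.single 2 n (1 : ℂ), f⟫_ℂ := by
  rw [lp.inner_single_left, RCLike.inner_apply, map_one, mul_one]

lemma adjoint_W_apply (hW0 : ∀ f : H, W f 0 = 0)
    (hWs : ∀ f : H, ∀ n, W f (n + 1) = w n * f n) (f : H) (n : ℕ) :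
    (ContinuousLinearMap.adjoint W) f n = (starRingEnd ℂ) (w n) * f (n + 1) := by
  rw [apply_eq_inner_single ((ContinuousLinearMap.adjoint W) f) n,
    ContinuousLinearMap.adjoint_inner_right, W_single hW0 hWs, inner_smul_left,
    lp.inner_single_left, RCLike.inner_apply, map_one, mul_one]

lemma norm_w_le (_hW0 : ∀ f : H, W f 0 = 0) (hWs : ∀ f : H, ∀ n, W f (n + 1) = w n * f n)
    (n : ℕ) : ‖w n‖ ≤ ‖W‖ := by
  have h1 : W (lp.single 2 n (1 : ℂ)) (n + 1) = w n := by
    rw [hWs, lp.single_apply_self, mul_one]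
  have h2 := lp.norm_apply_le_norm (E := fun _ : ℕ => ℂ) (p := 2) two_ne_zero
    (W (lp.single 2 n (1 : ℂ))) (n + 1)
  have h3 : ‖(lp.single 2 n (1 : ℂ) : H)‖ = 1 := by
    have h4 := lp.norm_single (E := fun _ : ℕ => ℂ) (p := 2) (by norm_num)
      n (1 : ℂ)
    simpa using h4
  have h5 := W.le_opNorm (lp.single 2 n (1 : ℂ))
  rw [h3, mul_one] at h5
  rw [← h1]
  exact h2.trans h5

end Shift

/-- Every injective unilateral weighted shift is supraposinormal, with
Q = diag{|w₁|²,|w₂|²,...} (injective with dense range) and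
P = diag{1, 0, |w₀|², |w₁|², ...}. -/
theorem injective_weighted_shift_supraposinormal
    (w : ℕ → ℂ) (hw : ∀ n, w n ≠ 0)
    (W : lp (fun _ : ℕ => ℂ) 2 →L[ℂ] lp (fun _ : ℕ => ℂ) 2)
    (hW0 : ∀ f : lp (fun _ : ℕ => ℂ) 2, W f 0 = 0)
    (hWs : ∀ f : lp (fun _ : ℕ => ℂ) 2, ∀ n : ℕ, W f (n + 1) = w n * f n) :
    ∃ Q P : lp (fun _ : ℕ => ℂ) 2 →L[ℂ] lp (fun _ : ℕ => ℂ) 2,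
      Q.IsPositive ∧ P.IsPositive ∧ Function.Injective Q ∧ DenseRange Q ∧
      (∀ f : lp (fun _ : ℕ => ℂ) 2, ∀ n : ℕ,
        Q f n = ((‖w (n + 1)‖ : ℂ) ^ 2) * f n) ∧
      (∀ f : lp (fun _ : ℕ => ℂ) 2, P f 0 = f 0) ∧
      (∀ f : lp (fun _ : ℕ => ℂ) 2, P f 1 = 0) ∧
      (∀ f : lp (fun _ : ℕ => ℂ) 2, ∀ n : ℕ,
        P f (n + 2) = ((‖w n‖ : ℂ) ^ 2) * f (n + 2)) ∧
      W ∘L Q ∘L adjoint W = adjoint W ∘L P ∘L W := by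
  set dQ : ℕ → ℝ := fun n => ‖w (n + 1)‖ ^ 2 with hdQdef
  set dP : ℕ → ℝ := fun n => match n with
    | 0 => 1
    | 1 => 0
    | (k + 2) => ‖w k‖ ^ 2 with hdPdef
  set C : ℝ := 1 + ‖W‖ ^ 2 with hCdef
  have hC : 0 ≤ C := by positivity
  have hwW : ∀ n, ‖w n‖ ^ 2 ≤ C := by
    intro n
    have h1 := norm_w_le hW0 hWs n
    have h2 : (0:ℝ) ≤ ‖w n‖ := norm_nonneg _
    nlinarith
  have hdQ : ∀ n, |dQ n| ≤ C := fun n => by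
    rw [abs_of_nonneg (by positivity)]; exact hwW (n + 1)
  have hdP : ∀ n, |dP n| ≤ C := by
    intro n
    match n with
    | 0 => simp only [hdPdef, abs_one]; nlinarith [sq_nonneg ‖W‖]
    | 1 => simp only [hdPdef, abs_zero]; exact hC
    | (k + 2) =>
      show |‖w k‖ ^ 2| ≤ C
      rw [abs_of_nonneg (by positivity)]; exact hwW k
  refine ⟨diagOp dQ C hC hdQ, diagOp dP C hC hdP, ?_, ?_, ?_, ?_, ?_, ?_, ?_, ?_, ?_⟩
  · exact diagOp_isPositive dQ C hC hdQ fun n => by positivity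
  · refine diagOp_isPositive dP C hC hdP fun n => ?_
    match n with
    | 0 => exact zero_le_one
    | 1 => exact le_refl 0
    | (k + 2) => exact sq_nonneg _
  · exact diagOp_injective dQ C hC hdQ fun n =>
      pow_ne_zero 2 (norm_ne_zero_iff.mpr (hw (n + 1)))
  · exact denseRange_of_injective_isSelfAdjoint _ (diagOp_isSelfAdjoint dQ C hC hdQ)
      (diagOp_injective dQ C hC hdQ fun n =>
        pow_ne_zero 2 (norm_ne_zero_iff.mpr (hw (n + 1))))
  · intro f n
    rw [diagOp_apply]
    show ((‖w (n + 1)‖ ^ 2 : ℝ) : ℂ) * f n = _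
    rw [Complex.ofReal_pow]
  · intro f
    rw [diagOp_apply]
    show ((1 : ℝ) : ℂ) * f 0 = f 0
    rw [Complex.ofReal_one, one_mul]
  · intro f
    rw [diagOp_apply]
    show ((0 : ℝ) : ℂ) * f 1 = 0
    rw [Complex.ofReal_zero, zero_mul]
  · intro f n
    rw [diagOp_apply]
    show ((‖w n‖ ^ 2 : ℝ) : ℂ) * f (n + 2) = _
    rw [Complex.ofReal_pow]
  · refine ContinuousLinearMap.ext fun f => lp.ext (funext fun n => ?_)
    show (W ((diagOp dQ C hC hdQ) ((adjoint W) f))) n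
        = ((adjoint W) ((diagOp dP C hC hdP) (W f))) n
    match n with
    | 0 =>
      rw [hW0, adjoint_W_apply hW0 hWs, diagOp_apply]
      show (0:ℂ) = (starRingEnd ℂ) (w 0) * (((dP 1 : ℝ) : ℂ) * (W f) 1)
      show (0:ℂ) = (starRingEnd ℂ) (w 0) * (((0 : ℝ) : ℂ) * (W f) 1)
      rw [Complex.ofReal_zero, zero_mul, mul_zero]
    | (k + 1) =>
      rw [hWs, diagOp_apply, adjoint_W_apply hW0 hWs, adjoint_W_apply hW0 hWs,
        diagOp_apply, hWs]
      show w k * (((‖w (k + 1)‖ ^ 2 : ℝ) : ℂ) * ((starRingEnd ℂ) (w k) * f (k + 1)))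
          = (starRingEnd ℂ) (w (k + 1)) * (((‖w k‖ ^ 2 : ℝ) : ℂ) * (w (k + 1) * f (k + 1)))
      rw [Complex.ofReal_pow, Complex.ofReal_pow]
      have h1 : ((‖w (k + 1)‖ : ℂ)) ^ 2 = (starRingEnd ℂ) (w (k + 1)) * w (k + 1) :=
        (RCLike.conj_mul (w (k + 1))).symm
      have h2 : ((‖w k‖ : ℂ)) ^ 2 = (starRingEnd ℂ) (w k) * w k :=
        (RCLike.conj_mul (w k)).symm
      rw [h1, h2]
      ring

end
end

section
/- A unilateral weighted shift W on ℓ² with nonzero first weight w₀ and some zero weight wₙ = 0 (n > 0) satisfies neither ker W ⊆ ker W* nor ker W* ⊆ ker W; consequently W is not supraposinormal. -/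
open ContinuousLinearMap

/-- A unilateral weighted shift with w₀ ≠ 0 and some minimal zero weight wₙ = 0
(n > 0) satisfies neither ker W ⊆ ker W* nor ker W* ⊆ ker W; hence W is not
supraposinormal. -/
theorem noninjective_weighted_shift_not_supraposinormal
    (w : ℕ → ℂ) (n : ℕ) (hn : 0 < n) (hw0 : w 0 ≠ 0) (hwn : w n = 0)
    (hmin : ∀ m < n, w m ≠ 0)
    (W : lp (fun _ : ℕ => ℂ) 2 →L[ℂ] lp (fun _ : ℕ => ℂ) 2)
    (hW0 : ∀ f : lp (fun _ : ℕ => ℂ) 2, W f 0 = 0)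
    (hWs : ∀ f : lp (fun _ : ℕ => ℂ) 2, ∀ m : ℕ, W f (m + 1) = w m * f m) :
    ¬ (LinearMap.ker (W : lp (fun _ : ℕ => ℂ) 2 →ₗ[ℂ] lp (fun _ : ℕ => ℂ) 2) ≤
      LinearMap.ker (adjoint W : lp (fun _ : ℕ => ℂ) 2 →ₗ[ℂ] lp (fun _ : ℕ => ℂ) 2)) ∧
    ¬ (LinearMap.ker (adjoint W : lp (fun _ : ℕ => ℂ) 2 →ₗ[ℂ] lp (fun _ : ℕ => ℂ) 2) ≤
      LinearMap.ker (W : lp (fun _ : ℕ => ℂ) 2 →ₗ[ℂ] lp (fun _ : ℕ => ℂ) 2)) := by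
  set e : ℕ → lp (fun _ : ℕ => ℂ) 2 := fun k => lp.single 2 k (1 : ℂ) with he
  -- e n ∈ ker W
  have hen : W (e n) = 0 := by
    apply lp.ext
    funext j
    match j with
    | 0 => simpa using hW0 (e n)
    | (m+1) =>
      rw [hWs (e n) m]
      simp only [he, lp.coeFn_zero, Pi.zero_apply]
      rcases eq_or_ne m n with h | h
      · subst h; rw [lp.single_apply_self]; simp [hwn]
      · rw [lp.single_apply_ne 2 n 1 h]; simp
  -- adjoint W (e n) ≠ 0
  have hadn : adjoint W (e n) ≠ 0 := by
    intro h
    obtain ⟨k, hk⟩ : ∃ k, n = k + 1 := ⟨n - 1, (Nat.succ_pred_eq_of_pos hn).symm⟩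
    have h1 : (inner ℂ (adjoint W (e n)) (e k) : ℂ) = 0 := by simp [h]
    rw [adjoint_inner_left] at h1
    rw [he, lp.inner_single_left] at h1
    have h2 : W (e k) n = w k * (e k) k := by rw [hk]; exact hWs (e k) k
    rw [lp.single_apply_self] at h2
    have hk' : w k ≠ 0 := hmin k (by omega)
    simp only [he] at h2
    simp [h2, RCLike.inner_apply, hk'] at h1
  -- adjoint W (e 0) = 0
  have had0 : adjoint W (e 0) = 0 := by
    rw [← inner_self_eq_zero (𝕜 := ℂ)]
    rw [adjoint_inner_left, he, lp.inner_single_left, hW0]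
    simp
  -- e 0 ∉ ker W
  have he0 : W (e 0) ≠ 0 := by
    intro h
    have : W (e 0) 1 = 0 := by rw [h]; simp
    rw [hWs (e 0) 0, he, lp.single_apply_self] at this
    simp [hw0] at this
  constructor
  · intro hle
    exact hadn (hle (by simpa [LinearMap.mem_ker] using hen))
  · intro hle
    exact he0 (hle (by simpa [LinearMap.mem_ker] using had0))
end

section
/- An injective unilateral weighted shift W with weight sequence (wₙ) is posinormal if and only if sup_n |wₙ/w_{n+1}| < ∞. -/
open ContinuousLinearMap
open scoped ENNReal

set_option maxHeartbeats 1000000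
set_option synthInstance.maxHeartbeats 400000

local notation "⟪" x ", " y "⟫" => @inner ℂ _ _ x y

private lemma lp_hasSum_normsq (g : lp (fun _ : ℕ => ℂ) 2) :
    HasSum (fun n => ‖g n‖ ^ 2) (‖g‖ ^ 2) := by
  have h := lp.hasSum_norm (p := 2) (E := fun _ : ℕ => ℂ) (by norm_num) g
  have h2 : ((2 : ℝ≥0∞).toReal) = (2 : ℝ) := by norm_num
  rw [h2] at h
  have e1 : ∀ x : ℝ, x ^ (2 : ℝ) = x ^ 2 := fun x => by
    rw [show (2:ℝ) = ((2:ℕ):ℝ) by norm_num, Real.rpow_natCast]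
  simpa only [e1] using h

private lemma lp_normsq_eq (g : lp (fun _ : ℕ => ℂ) 2) :
    ‖g‖ ^ 2 = ∑' n, ‖g n‖ ^ 2 := (lp_hasSum_normsq g).tsum_eq.symm

private lemma coord_eq_inner (g : lp (fun _ : ℕ => ℂ) 2) (n : ℕ) :
    ⟪lp.single 2 n (1 : ℂ), g⟫ = g n := by
  rw [lp.inner_single_left]
  simp [RCLike.inner_apply]

/-- An injective unilateral weighted shift W is posinormal iff
sup_n |wₙ/w_{n+1}| < ∞. -/
theorem injective_shift_posinormal_iff
    (w : ℕ → ℂ) (hw : ∀ n, w n ≠ 0)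
    (W : lp (fun _ : ℕ => ℂ) 2 →L[ℂ] lp (fun _ : ℕ => ℂ) 2)
    (hW0 : ∀ f : lp (fun _ : ℕ => ℂ) 2, W f 0 = 0)
    (hWs : ∀ f : lp (fun _ : ℕ => ℂ) 2, ∀ n : ℕ, W f (n + 1) = w n * f n) :
    (∃ γ : ℝ, 0 ≤ γ ∧
        (((γ : ℂ) ^ 2) • (adjoint W ∘L W) - W ∘L adjoint W).IsPositive) ↔
      (∃ B : ℝ, ∀ n : ℕ, ‖w n / w (n + 1)‖ ≤ B) := by
  classical
  set e : ℕ → lp (fun _ : ℕ => ℂ) 2 := fun n => lp.single 2 n (1 : ℂ) with he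
  -- action of W on basis vectors
  have hWe : ∀ n : ℕ, W (e n) = w n • e (n + 1) := by
    intro n
    refine lp.ext (funext fun k => ?_)
    match k with
    | 0 =>
      rw [hW0]
      rw [lp.coeFn_smul, Pi.smul_apply]
      rw [he]
      simp [lp.single_apply_ne _ _ _ (by omega : (0:ℕ) ≠ n + 1)]
    | (k + 1) =>
      rw [hWs, lp.coeFn_smul, Pi.smul_apply, he]
      simp only
      by_cases hkn : k = n
      · subst hkn
        rw [lp.single_apply_self, lp.single_apply_self]
        simp
      · rw [lp.single_apply_ne _ _ _ hkn, lp.single_apply_ne _ _ _ (by omega : k + 1 ≠ n + 1)]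
        simp
  -- adjoint coordinate formula
  have hadj : ∀ (f : lp (fun _ : ℕ => ℂ) 2) (n : ℕ),
      (adjoint W f) n = (starRingEnd ℂ) (w n) * f (n + 1) := by
    intro f n
    have h1 : (adjoint W f) n = ⟪e n, adjoint W f⟫ := (coord_eq_inner _ n).symm
    rw [h1, adjoint_inner_right, hWe, inner_smul_left, coord_eq_inner]
  -- norm of W f
  have hWnorm : ∀ f : lp (fun _ : ℕ => ℂ) 2,
      (W f) 0 = 0 ∧ ∀ n, ‖(W f) (n+1)‖ ^ 2 = ‖w n‖ ^ 2 * ‖f n‖ ^ 2 := by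
    intro f
    refine ⟨hW0 f, fun n => ?_⟩
    rw [hWs, norm_mul, mul_pow]
  -- the key formula for reApplyInnerSelf
  have hkey : ∀ (γ : ℝ) (x : lp (fun _ : ℕ => ℂ) 2),
      (((γ : ℂ) ^ 2) • (adjoint W ∘L W) - W ∘L adjoint W).reApplyInnerSelf x
        = γ ^ 2 * ‖W x‖ ^ 2 - ‖adjoint W x‖ ^ 2 := by
    intro γ x
    have h1 : ⟪(((γ : ℂ) ^ 2) • (adjoint W ∘L W) - W ∘L adjoint W) x, x⟫
        = ((γ : ℂ) ^ 2) * ⟪W x, W x⟫ - ⟪adjoint W x, adjoint W x⟫ := by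
      rw [ContinuousLinearMap.sub_apply, inner_sub_left, ContinuousLinearMap.smul_apply,
        inner_smul_left, ContinuousLinearMap.comp_apply, ContinuousLinearMap.comp_apply,
        adjoint_inner_left, (adjoint_inner_right W (adjoint W x) x).symm]
      congr 2
      simp [Complex.conj_ofReal]
    rw [ContinuousLinearMap.reApplyInnerSelf, h1]
    rw [inner_self_eq_norm_sq_to_K, inner_self_eq_norm_sq_to_K]
    simp [Complex.sub_re, Complex.mul_re, ← Complex.ofReal_pow]
  constructor
  · rintro ⟨γ, hγ, hsa, hpos⟩
    refine ⟨γ, fun n => ?_⟩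
    have h := hpos (e (n + 1))
    rw [hkey] at h
    -- compute the two norms
    have hn1 : ‖W (e (n+1))‖ = ‖w (n+1)‖ := by
      rw [hWe, norm_smul]
      have : ‖e (n+2)‖ = 1 := by
        rw [he]
        simpa using lp.norm_single (p := 2) (E := fun _ : ℕ => ℂ) (by norm_num)
          (fun _ => (1 : ℂ)) (n+2)
      rw [this, mul_one]
    have hn2 : adjoint W (e (n+1)) = (starRingEnd ℂ) (w n) • e n := by
      refine lp.ext (funext fun k => ?_)
      rw [hadj, lp.coeFn_smul, Pi.smul_apply, he]
      simp only
      by_cases hkn : k = n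
      · subst hkn
        rw [lp.single_apply_self, lp.single_apply_self]
        simp
      · rw [lp.single_apply_ne _ _ _ (by omega : k + 1 ≠ n + 1), lp.single_apply_ne _ _ _ hkn]
        simp
    have hn2' : ‖adjoint W (e (n+1))‖ = ‖w n‖ := by
      rw [hn2, norm_smul]
      have : ‖e n‖ = 1 := by
        rw [he]
        simpa using lp.norm_single (p := 2) (E := fun _ : ℕ => ℂ) (by norm_num)
          (fun _ => (1 : ℂ)) n
      simp [this]
    rw [hn1, hn2'] at h
    -- ‖w n‖ ≤ γ * ‖w (n+1)‖
    have hle : ‖w n‖ ≤ γ * ‖w (n+1)‖ := by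
      have h2 : ‖w n‖ ^ 2 ≤ (γ * ‖w (n+1)‖) ^ 2 := by
        rw [mul_pow]; linarith
      have h3 := Real.sqrt_le_sqrt h2
      rwa [Real.sqrt_sq (norm_nonneg _), Real.sqrt_sq (by positivity)] at h3
    rw [norm_div, div_le_iff₀ (norm_pos_iff.mpr (hw (n+1)))]
    exact hle
  · rintro ⟨B, hB⟩
    set γ : ℝ := max B 0 with hγdef
    have hγ : 0 ≤ γ := le_max_right _ _
    have hle : ∀ n, ‖w n‖ ≤ γ * ‖w (n+1)‖ := by
      intro n
      have h1 : ‖w n / w (n+1)‖ ≤ γ := le_trans (hB n) (le_max_left _ _)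
      rw [norm_div, div_le_iff₀ (norm_pos_iff.mpr (hw (n+1)))] at h1
      exact h1
    refine ⟨γ, hγ, ?_, ?_⟩
    · -- self-adjointness
      have h1 : IsSelfAdjoint (adjoint W ∘L W) := by
        rw [ContinuousLinearMap.isSelfAdjoint_iff']
        rw [adjoint_comp, adjoint_adjoint]
      have h2 : IsSelfAdjoint (W ∘L adjoint W) := by
        rw [ContinuousLinearMap.isSelfAdjoint_iff']
        rw [adjoint_comp, adjoint_adjoint]
      have h3 : IsSelfAdjoint (((γ : ℂ) ^ 2) • (adjoint W ∘L W)) := by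
        refine IsSelfAdjoint.smul ?_ h1
        show star _ = _
        simp [Complex.star_def, Complex.conj_ofReal]
      exact (h3.sub h2).isSymmetric
    · intro x
      rw [hkey]
      have hsum : ‖adjoint W x‖ ^ 2 ≤ γ ^ 2 * ‖W x‖ ^ 2 := by
        -- summability facts
        have hsW : HasSum (fun n => ‖(W x) n‖ ^ 2) (‖W x‖ ^ 2) := lp_hasSum_normsq (W x)
        have hsA : HasSum (fun n => ‖(adjoint W x) n‖ ^ 2) (‖adjoint W x‖ ^ 2) :=
          lp_hasSum_normsq (adjoint W x)
        have hsumW : Summable (fun n => ‖(W x) n‖ ^ 2) := hsW.summable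
        -- termwise bound: ‖(W† x) n‖² ≤ γ² * ‖(W x) (n+2)‖²
        have hterm : ∀ n, ‖(adjoint W x) n‖ ^ 2 ≤ γ ^ 2 * ‖(W x) (n+2)‖ ^ 2 := by
          intro n
          rw [hadj, hWs]
          rw [norm_mul, norm_mul, RCLike.norm_conj]
          have hb : ‖w n‖ * ‖x (n+1)‖ ≤ (γ * ‖w (n+1)‖) * ‖x (n+1)‖ :=
            mul_le_mul_of_nonneg_right (hle n) (norm_nonneg _)
          calc (‖w n‖ * ‖x (n+1)‖) ^ 2 ≤ ((γ * ‖w (n+1)‖) * ‖x (n+1)‖) ^ 2 := by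
                apply pow_le_pow_left₀ (by positivity) hb
            _ = γ ^ 2 * (‖w (n+1)‖ * ‖x (n+1)‖) ^ 2 := by ring
        have hsum2 : Summable (fun n => γ ^ 2 * ‖(W x) (n+2)‖ ^ 2) := by
          apply Summable.mul_left
          exact hsumW.comp_injective (add_left_injective 2)
        have h4 : ∑' n, ‖(adjoint W x) n‖ ^ 2 ≤ ∑' n, γ ^ 2 * ‖(W x) (n+2)‖ ^ 2 :=
          Summable.tsum_le_tsum hterm hsA.summable hsum2
        have h5 : ∑' n, γ ^ 2 * ‖(W x) (n+2)‖ ^ 2 ≤ γ ^ 2 * ‖W x‖ ^ 2 := by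
          rw [tsum_mul_left]
          apply mul_le_mul_of_nonneg_left _ (by positivity)
          rw [← hsW.tsum_eq]
          exact Summable.tsum_le_tsum_of_inj (fun n => n + 2) (add_left_injective 2)
            (fun c _ => by positivity) (fun n => le_rfl)
            (hsumW.comp_injective (add_left_injective 2)) hsumW
        calc ‖adjoint W x‖ ^ 2 = ∑' n, ‖(adjoint W x) n‖ ^ 2 := lp_normsq_eq _
          _ ≤ ∑' n, γ ^ 2 * ‖(W x) (n+2)‖ ^ 2 := h4
          _ ≤ γ ^ 2 * ‖W x‖ ^ 2 := h5
      linarith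
end

section
/- Let M = M({aᵢ},{cⱼ}) be a bounded lower triangular factorable matrix on ℓ² with aᵢ, cⱼ > 0 for all i, j and with a_k/c_k strictly decreasing to 0. Define diagonal operators P with entries p_k = (c_{k+1}a_k − c_k a_{k+1})/(c_k c_{k+1} a_k²) and Q with entries q₀ = 1/(c₀a₀), q_{k+1} = (c_{k+1}a_k − c_k a_{k+1})/(c_{k+1}² a_k a_{k+1}), and assume P, Q ∈ B(ℓ²). Then M* P M = M Q M*, and this common operator has (i,j) entry c_{min(i,j)} a_{max(i,j)}; hence M is supraposinormal. -/
open ContinuousLinearMap Filter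

local notation "𝓗" => lp (fun _ : ℕ => ℂ) 2
local notation "⟪" x ", " y "⟫" => @inner ℂ _ _ x y

private lemma single_coord (j l : ℕ) (z : ℂ) :
    (lp.single 2 j z : 𝓗) l = if l = j then z else 0 := by
  rcases eq_or_ne l j with h | h
  · subst h; simp [lp.single_apply_self]
  · simp [lp.single_apply_ne _ _ _ h, h]

private lemma tele_hasSum (F : ℕ → ℝ) (hmono : ∀ k, F (k + 1) ≤ F k)
    (hlim : Tendsto F atTop (nhds 0)) (m : ℕ) :
    HasSum (fun k => if m ≤ k then F k - F (k + 1) else 0) (F m) := by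
  have hnn : ∀ k, 0 ≤ if m ≤ k then F k - F (k + 1) else 0 := by
    intro k; split
    · linarith [hmono k]
    · exact le_refl 0
  rw [hasSum_iff_tendsto_nat_of_nonneg hnn]
  have hps : ∀ n, ∑ k ∈ Finset.range n, (if m ≤ k then F k - F (k + 1) else 0)
      = F m - F (max m n) := by
    intro n
    induction n with
    | zero => simp
    | succ n ih =>
      rw [Finset.sum_range_succ, ih]
      rcases le_or_gt m n with h | h
      · rw [if_pos h, max_eq_right h, max_eq_right (h.trans (Nat.le_succ n))]; ring
      · rw [if_neg (not_le.mpr h), max_eq_left h.le, max_eq_left h]; ring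
  simp only [hps]
  have hmax : Tendsto (fun n => F (max m n)) atTop (nhds 0) :=
    hlim.comp (tendsto_atTop_mono (fun n => le_max_right m n) tendsto_id)
  simpa using tendsto_const_nhds.sub hmax

private lemma dense_span_single :
    Dense (↑(Submodule.span ℂ (Set.range fun i : ℕ => (lp.single 2 i (1 : ℂ) : 𝓗))) : Set 𝓗) := by
  rw [Submodule.dense_iff_topologicalClosure_eq_top, Submodule.topologicalClosure_eq_top_iff,
    Submodule.eq_bot_iff]
  intro f hf
  apply lp.ext
  funext k
  have h := (Submodule.mem_orthogonal _ f).mp hf (lp.single 2 k (1 : ℂ))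
    (Submodule.subset_span ⟨k, rfl⟩)
  rw [lp.inner_single_left] at h
  simpa using h

/-- Diagonal operators with nonvanishing diagonal have dense range. -/
private lemma diag_denseRange (d : ℕ → ℝ) (hd0 : ∀ k, d k ≠ 0)
    (T : 𝓗 →L[ℂ] 𝓗) (hT : ∀ f : 𝓗, ∀ k, T f k = (d k : ℂ) * f k) :
    DenseRange T := by
  have hsingle : ∀ k, (lp.single 2 k (1 : ℂ) : 𝓗) ∈ LinearMap.range (T : 𝓗 →ₗ[ℂ] 𝓗) := by
    intro k
    refine ⟨lp.single 2 k (((d k : ℂ))⁻¹), ?_⟩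
    apply lp.ext
    funext l
    show T (lp.single 2 k (((d k : ℂ))⁻¹)) l = (lp.single 2 k (1 : ℂ) : 𝓗) l
    rw [hT, single_coord, single_coord]
    rcases eq_or_ne l k with h | h
    · subst h
      rw [if_pos rfl, if_pos rfl, mul_inv_cancel₀ (by exact_mod_cast hd0 l)]
    · rw [if_neg h, if_neg h, mul_zero]
  have hle : Submodule.span ℂ (Set.range fun i : ℕ => (lp.single 2 i (1 : ℂ) : 𝓗))
      ≤ LinearMap.range (T : 𝓗 →ₗ[ℂ] 𝓗) :=
    Submodule.span_le.mpr (by rintro _ ⟨k, rfl⟩; exact hsingle k)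
  have hdense : Dense (↑(LinearMap.range (T : 𝓗 →ₗ[ℂ] 𝓗)) : Set 𝓗) :=
    dense_span_single.mono hle
  simpa [LinearMap.coe_range, DenseRange] using hdense

/-- A diagonal operator with real nonnegative diagonal is positive. -/
private lemma diag_isPositive (d : ℕ → ℝ) (hd0 : ∀ k, 0 ≤ d k)
    (T : 𝓗 →L[ℂ] 𝓗) (hT : ∀ f : 𝓗, ∀ k, T f k = (d k : ℂ) * f k) :
    T.IsPositive := by
  have hsa : IsSelfAdjoint T := by
    rw [ContinuousLinearMap.isSelfAdjoint_iff']
    symm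
    rw [ContinuousLinearMap.eq_adjoint_iff]
    intro x y
    rw [lp.inner_eq_tsum, lp.inner_eq_tsum]
    refine tsum_congr fun k => ?_
    rw [RCLike.inner_apply, RCLike.inner_apply, hT, hT, map_mul, Complex.conj_ofReal]
    ring
  refine ⟨hsa.isSymmetric, fun x => ?_⟩
  rw [ContinuousLinearMap.reApplyInnerSelf_apply, lp.inner_eq_tsum,
    RCLike.re_tsum ℂ (lp.summable_inner _ _)]
  refine tsum_nonneg fun k => ?_
  rw [RCLike.inner_apply, hT]
  have : (starRingEnd ℂ) ((d k : ℂ) * x k) * x k = ((d k * Complex.normSq (x k) : ℝ) : ℂ) := by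
    rw [map_mul, Complex.conj_ofReal, mul_assoc, ← Complex.normSq_eq_conj_mul_self]
    push_cast
    ring
  rw [mul_comm _ ((starRingEnd ℂ) _), this]
  simpa using mul_nonneg (hd0 k) (Complex.normSq_nonneg _)

private noncomputable def qfun (a c : ℕ → ℝ) : ℕ → ℝ
  | 0 => 1 / (c 0 * a 0)
  | (k + 1) => (c (k + 1) * a k - c k * a (k + 1)) / ((c (k + 1)) ^ 2 * a k * a (k + 1))

set_option maxHeartbeats 1000000 in
/-- For a bounded factorable matrix M with aᵢ, cⱼ > 0 and a_k/c_k strictly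
decreasing to 0, with the stated diagonal operators P and Q, one has
M* P M = M Q M*, the common operator has (i,j) entry c_{min(i,j)} a_{max(i,j)},
and M is supraposinormal (P and Q are positive with dense range). -/
theorem factorable_supraposinormal
    (a c : ℕ → ℝ) (ha : ∀ i, 0 < a i) (hc : ∀ j, 0 < c j)
    (hdec : StrictAnti fun k => a k / c k)
    (hlim : Tendsto (fun k => a k / c k) atTop (nhds 0))
    (M P Q : lp (fun _ : ℕ => ℂ) 2 →L[ℂ] lp (fun _ : ℕ => ℂ) 2)
    (hM : ∀ f : lp (fun _ : ℕ => ℂ) 2, ∀ i : ℕ,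
      M f i = (a i : ℂ) * ∑ j ∈ Finset.range (i + 1), (c j : ℂ) * f j)
    (hP : ∀ f : lp (fun _ : ℕ => ℂ) 2, ∀ k : ℕ,
      P f k = (((c (k + 1) * a k - c k * a (k + 1)) / (c k * c (k + 1) * (a k) ^ 2) : ℝ) : ℂ) * f k)
    (hQ0 : ∀ f : lp (fun _ : ℕ => ℂ) 2, Q f 0 = ((1 / (c 0 * a 0) : ℝ) : ℂ) * f 0)
    (hQs : ∀ f : lp (fun _ : ℕ => ℂ) 2, ∀ k : ℕ,
      Q f (k + 1) = (((c (k + 1) * a k - c k * a (k + 1)) / ((c (k + 1)) ^ 2 * a k * a (k + 1)) : ℝ) : ℂ) * f (k + 1)) :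
    adjoint M ∘L P ∘L M = M ∘L Q ∘L adjoint M ∧
    (∀ i j : ℕ,
      (inner ℂ ((adjoint M ∘L P ∘L M) (lp.single 2 j (1 : ℂ))) (lp.single 2 i (1 : ℂ)) : ℂ)
        = ((c (min i j) * a (max i j) : ℝ) : ℂ)) ∧
    P.IsPositive ∧ Q.IsPositive ∧ DenseRange P ∧ DenseRange Q := by
  classical
  -- basic positivity facts
  have hd : ∀ k, 0 < c (k + 1) * a k - c k * a (k + 1) := by
    intro k
    have h := hdec (Nat.lt_succ_self k)
    have h2 := (div_lt_div_iff₀ (hc (k + 1)) (hc k)).mp h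
    nlinarith
  have hppos : ∀ k, 0 < (c (k + 1) * a k - c k * a (k + 1)) / (c k * c (k + 1) * (a k) ^ 2) := by
    intro k
    exact div_pos (hd k) (mul_pos (mul_pos (hc k) (hc (k + 1))) (pow_pos (ha k) 2))
  have hq' : ∀ f : 𝓗, ∀ k, Q f k = ((qfun a c k : ℝ) : ℂ) * f k := by
    intro f k
    cases k with
    | zero => exact hQ0 f
    | succ k => exact hQs f k
  have hqpos : ∀ k, 0 < qfun a c k := by
    intro k
    cases k with
    | zero =>
      exact one_div_pos.mpr (mul_pos (hc 0) (ha 0))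
    | succ k =>
      exact div_pos (hd k) (mul_pos (mul_pos (pow_pos (hc (k + 1)) 2) (ha k)) (ha (k + 1)))
  -- coordinates of M and M* on the standard basis
  have hMe : ∀ j k : ℕ, (M (lp.single 2 j (1 : ℂ)) : ∀ _ : ℕ, ℂ) k
      = if j ≤ k then ((a k * c j : ℝ) : ℂ) else 0 := by
    intro j k
    rw [hM]
    have hterm : ∀ l, (c l : ℂ) * (lp.single 2 j (1 : ℂ) : 𝓗) l
        = if l = j then (c j : ℂ) else 0 := by
      intro l
      rw [single_coord]
      split_ifs with h
      · subst h; ring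
      · ring
    rw [Finset.sum_congr rfl fun l _ => hterm l, Finset.sum_ite_eq' (Finset.range (k + 1)) j
      fun _ => (c j : ℂ)]
    by_cases h : j ≤ k
    · rw [if_pos (Finset.mem_range.mpr (Nat.lt_succ_of_le h)), if_pos h]
      push_cast
      ring
    · rw [if_neg (fun hh => h (Nat.lt_succ_iff.mp (Finset.mem_range.mp hh))), if_neg h, mul_zero]
  have hMad : ∀ j k : ℕ, (adjoint M (lp.single 2 j (1 : ℂ)) : ∀ _ : ℕ, ℂ) k
      = if k ≤ j then ((a j * c k : ℝ) : ℂ) else 0 := by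
    intro j k
    have h1 : (adjoint M (lp.single 2 j (1 : ℂ)) : ∀ _ : ℕ, ℂ) k
        = ⟪(lp.single 2 k (1 : ℂ) : 𝓗), adjoint M (lp.single 2 j (1 : ℂ))⟫ := by
      rw [lp.inner_single_left, RCLike.inner_apply]
      simp
    rw [h1, adjoint_inner_right, lp.inner_single_right, RCLike.inner_apply, hMe k j]
    split_ifs with h
    · rw [Complex.conj_ofReal, one_mul]
    · simp
  -- the (i,j) entries of M* P M
  have key1 : ∀ i j : ℕ, ⟪(adjoint M ∘L P ∘L M) (lp.single 2 j (1 : ℂ)), (lp.single 2 i (1 : ℂ) : 𝓗)⟫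
      = ((c (min i j) * a (max i j) : ℝ) : ℂ) := by
    intro i j
    have hcomp : ⟪(adjoint M ∘L P ∘L M) (lp.single 2 j (1 : ℂ)), (lp.single 2 i (1 : ℂ) : 𝓗)⟫
        = ⟪P (M (lp.single 2 j (1 : ℂ))), M (lp.single 2 i (1 : ℂ))⟫ := by
      simp only [coe_comp', Function.comp_apply]
      rw [adjoint_inner_left]
    rw [hcomp, lp.inner_eq_tsum]
    have hterm : ∀ k, ⟪(P (M (lp.single 2 j (1 : ℂ))) : ∀ _ : ℕ, ℂ) k,
        (M (lp.single 2 i (1 : ℂ)) : ∀ _ : ℕ, ℂ) k⟫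
        = ((c i * c j * (if max i j ≤ k then a k / c k - a (k + 1) / c (k + 1) else 0) : ℝ) : ℂ) := by
      intro k
      rw [RCLike.inner_apply, hP, hMe, hMe]
      by_cases h : max i j ≤ k
      · have hj : j ≤ k := le_trans (le_max_right i j) h
        have hi : i ≤ k := le_trans (le_max_left i j) h
        rw [if_pos hj, if_pos hi, if_pos h, ← Complex.ofReal_mul, Complex.conj_ofReal,
          ← Complex.ofReal_mul]
        congr 1
        have hck : c k ≠ 0 := (hc k).ne'
        have hck1 : c (k + 1) ≠ 0 := (hc (k + 1)).ne'
        have hak : a k ≠ 0 := (ha k).ne'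
        field_simp
      · rw [if_neg h]
        rcases not_and_or.mp (mt max_le_iff.mpr h : ¬(i ≤ k ∧ j ≤ k)) with hi | hj
        · rw [if_neg hi]; simp
        · rw [if_neg hj]; simp
    rw [tsum_congr hterm]
    have hmono : ∀ k, a (k + 1) / c (k + 1) ≤ a k / c k := fun k => (hdec (Nat.lt_succ_self k)).le
    have hsum := ((tele_hasSum (fun k => a k / c k) hmono hlim (max i j)).mul_left
      (c i * c j)).mapL Complex.ofRealCLM
    simp only [Complex.ofRealCLM_apply] at hsum
    rw [hsum.tsum_eq]
    congr 1
    rcases le_total i j with h | h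
    · rw [min_eq_left h, max_eq_right h]
      field_simp [(hc j).ne']
    · rw [min_eq_right h, max_eq_left h]
      field_simp [(hc i).ne']
  -- the (i,j) entries of M Q M*
  have key2 : ∀ i j : ℕ, ⟪(M ∘L Q ∘L adjoint M) (lp.single 2 j (1 : ℂ)), (lp.single 2 i (1 : ℂ) : 𝓗)⟫
      = ((c (min i j) * a (max i j) : ℝ) : ℂ) := by
    intro i j
    have hcomp : ⟪(M ∘L Q ∘L adjoint M) (lp.single 2 j (1 : ℂ)), (lp.single 2 i (1 : ℂ) : 𝓗)⟫
        = ⟪Q (adjoint M (lp.single 2 j (1 : ℂ))), adjoint M (lp.single 2 i (1 : ℂ))⟫ := by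
      simp only [coe_comp', Function.comp_apply]
      exact (adjoint_inner_right M _ _).symm
    rw [hcomp, lp.inner_eq_tsum]
    have hterm : ∀ k, ⟪(Q (adjoint M (lp.single 2 j (1 : ℂ))) : ∀ _ : ℕ, ℂ) k,
        (adjoint M (lp.single 2 i (1 : ℂ)) : ∀ _ : ℕ, ℂ) k⟫
        = ((if k ≤ min i j then qfun a c k * c k ^ 2 * (a i * a j) else 0 : ℝ) : ℂ) := by
      intro k
      rw [RCLike.inner_apply, hq', hMad, hMad]
      by_cases h : k ≤ min i j
      · rw [if_pos (h.trans (min_le_right i j)), if_pos (h.trans (min_le_left i j)), if_pos h,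
          ← Complex.ofReal_mul, Complex.conj_ofReal, ← Complex.ofReal_mul]
        congr 1
        ring
      · rw [if_neg h]
        rcases not_and_or.mp (mt le_min_iff.mpr h : ¬(k ≤ i ∧ k ≤ j)) with hi | hj
        · rw [if_neg hi, zero_mul]; simp
        · rw [if_neg hj]; simp
    rw [tsum_congr hterm]
    have hzero : ∀ k ∉ Finset.range (min i j + 1),
        ((if k ≤ min i j then qfun a c k * c k ^ 2 * (a i * a j) else 0 : ℝ) : ℂ) = 0 := by
      intro k hk
      rw [if_neg (by simpa [Nat.lt_succ_iff] using hk)]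
      simp
    rw [tsum_eq_sum hzero]
    have hsum : ∀ mm : ℕ, ∑ k ∈ Finset.range (mm + 1), qfun a c k * c k ^ 2 = c mm / a mm := by
      intro mm
      induction mm with
      | zero =>
        rw [Finset.sum_range_one]
        show 1 / (c 0 * a 0) * c 0 ^ 2 = c 0 / a 0
        field_simp [(hc 0).ne', (ha 0).ne']
      | succ mm ih =>
        rw [Finset.sum_range_succ, ih]
        show c mm / a mm + (c (mm + 1) * a mm - c mm * a (mm + 1)) /
          ((c (mm + 1)) ^ 2 * a mm * a (mm + 1)) * c (mm + 1) ^ 2 = c (mm + 1) / a (mm + 1)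
        have h1 : a mm ≠ 0 := (ha mm).ne'
        have h2 : a (mm + 1) ≠ 0 := (ha (mm + 1)).ne'
        have h3 : c (mm + 1) ≠ 0 := (hc (mm + 1)).ne'
        field_simp
        ring
    calc ∑ k ∈ Finset.range (min i j + 1),
          ((if k ≤ min i j then qfun a c k * c k ^ 2 * (a i * a j) else 0 : ℝ) : ℂ)
        = ∑ k ∈ Finset.range (min i j + 1), ((qfun a c k * c k ^ 2 * (a i * a j) : ℝ) : ℂ) :=
          Finset.sum_congr rfl fun k hk => by
            rw [if_pos (Nat.lt_succ_iff.mp (Finset.mem_range.mp hk))]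
      _ = (((∑ k ∈ Finset.range (min i j + 1), qfun a c k * c k ^ 2) * (a i * a j) : ℝ) : ℂ) := by
          rw [Finset.sum_mul]
          push_cast
          rfl
      _ = ((c (min i j) / a (min i j) * (a i * a j) : ℝ) : ℂ) := by rw [hsum (min i j)]
      _ = ((c (min i j) * a (max i j) : ℝ) : ℂ) := by
          congr 1
          rcases le_total i j with h | h
          · rw [min_eq_left h, max_eq_right h]
            field_simp [(ha i).ne']
          · rw [min_eq_right h, max_eq_left h]
            field_simp [(ha j).ne']
  -- the operator identity
  have hTS : adjoint M ∘L P ∘L M = M ∘L Q ∘L adjoint M := by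
    apply ContinuousLinearMap.ext_on dense_span_single
    rintro x ⟨j, rfl⟩
    apply lp.ext
    funext i
    have hco : ∀ f : 𝓗, f i = (starRingEnd ℂ) ⟪f, (lp.single 2 i (1 : ℂ) : 𝓗)⟫ := by
      intro f
      rw [lp.inner_single_right, RCLike.inner_apply]
      simp
    show ((adjoint M ∘L P ∘L M) (lp.single 2 j (1 : ℂ)) : ∀ _ : ℕ, ℂ) i
        = ((M ∘L Q ∘L adjoint M) (lp.single 2 j (1 : ℂ)) : ∀ _ : ℕ, ℂ) i
    rw [hco ((adjoint M ∘L P ∘L M) (lp.single 2 j (1 : ℂ))),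
      hco ((M ∘L Q ∘L adjoint M) (lp.single 2 j (1 : ℂ))), key1 i j, key2 i j]
  refine ⟨hTS, fun i j => key1 i j, ?_, ?_, ?_, ?_⟩
  · exact diag_isPositive _ (fun k => (hppos k).le) P hP
  · exact diag_isPositive _ (fun k => (hqpos k).le) Q hq'
  · exact diag_denseRange _ (fun k => (hppos k).ne') P hP
  · exact diag_denseRange _ (fun k => (hqpos k).ne') Q hq'
end

section
/- Let M = M({aᵢ},{cⱼ}) be a bounded factorable matrix on ℓ² with aᵢ, cⱼ > 0, a_k/c_k strictly decreasing to 0, and (a_k c_k)/(a_{k+1} c_{k+1}) bounded. If there exists δ > 0 such that c₀a₀ ≤ δ and (1/δ)(a_k/c_k)(δ − c_k a_k) ≤ a_{k+1}/c_{k+1} ≤ (δ·a_k/c_k)/(δ + c_{k+1}²·a_k/c_k) for every k ≥ 0, then M is hyponormal. -/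
set_option maxHeartbeats 1000000

open ContinuousLinearMap Filter

section Aux

private lemma step_ineq (u v d p q δ w s : ℝ) (hu : 0 < u) (hv : 0 < v) (hd : d = u - v)
    (hL' : δ * d ≤ p * u) (hR' : q * u ≤ δ * d) :
    0 ≤ p * u * s ^ 2 + (δ / v) * (w - d * s) ^ 2 - (q / v) * (w - u * s) ^ 2
      - (δ / u) * w ^ 2 := by
  have key : (p * u * s ^ 2 + (δ / v) * (w - d * s) ^ 2 - (q / v) * (w - u * s) ^ 2
      - (δ / u) * w ^ 2) * (u * v)
      = (δ * d - q * u) * (w - u * s) ^ 2 + (u * v * (p * u - δ * d)) * s ^ 2 := by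
    subst hd; field_simp; ring
  have h2 : 0 ≤ δ * d - q * u := by linarith
  have h3 : 0 ≤ p * u - δ * d := by linarith
  have h4 : 0 ≤ u * v := le_of_lt (mul_pos hu hv)
  nlinarith [mul_pos hu hv, key, sq_nonneg (w - u*s), sq_nonneg s,
    mul_nonneg h2 (sq_nonneg (w - u*s)), mul_nonneg (mul_nonneg h4 h3) (sq_nonneg s)]

private lemma aux_ind (a c : ℕ → ℝ) (ha : ∀ i, 0 < a i) (hc : ∀ j, 0 < c j) (δ : ℝ)
    (hL : ∀ k, δ * (a k / c k - a (k+1) / c (k+1)) ≤ (a k * c k) * (a k / c k))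
    (hR : ∀ k, (a (k+1) * c (k+1)) * (a k / c k) ≤ δ * (a k / c k - a (k+1) / c (k+1))) :
    ∀ (n m : ℕ) (t : ℝ) (x : ℕ → ℝ),
    δ * (c m / a m) * ((∑ i ∈ Finset.Ico m (m+n), a i * x i) + (a m / c m) * t) ^ 2
      - (c m) ^ 2 * (∑ i ∈ Finset.Ico m (m+n), a i * x i) ^ 2
      + ∑ j ∈ Finset.Ico m (m+n), (c j) ^ 2 * (∑ i ∈ Finset.Ico j (m+n), a i * x i) ^ 2
    ≤ (∑ i ∈ Finset.Ico m (m+n), (a i) ^ 2 * (t + ∑ j ∈ Finset.Ico m (i+1), c j * x j) ^ 2)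
      + δ * (a (m+n) / c (m+n)) * (t + ∑ j ∈ Finset.Ico m (m+n), c j * x j) ^ 2 := by
  intro n
  induction n with
  | zero =>
    intro m t x
    simp only [Nat.add_zero, Finset.Ico_self, Finset.sum_empty]
    have h : c m / a m * (0 + a m / c m * t) ^ 2 = a m / c m * t ^ 2 := by
      have h1 := (ha m).ne'
      have h2 := (hc m).ne'
      field_simp
      ring
    rw [mul_assoc, h, add_zero, mul_assoc]
    simp [mul_pow]
  | succ n IH =>
    intro m t x
    have ham := (ha m).ne'
    have hcm := (hc m).ne'
    have ham1 := (ha (m+1)).ne'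
    have hcm1 := (hc (m+1)).ne'
    have hmn : m + (n+1) = (m+1) + n := by omega
    rw [hmn]
    have hIH := IH (m+1) (t + c m * x m) x
    set A : ℝ := ∑ i ∈ Finset.Ico (m+1) (m+1+n), a i * x i with hA
    set u : ℝ := a m / c m with hu_def
    set v : ℝ := a (m+1) / c (m+1) with hv_def
    set s : ℝ := t + c m * x m with hs_def
    set w : ℝ := (a m * x m + A) + u * t with hw_def
    have hmlt : m < m + 1 + n := by omega
    have hsplit1 : (∑ i ∈ Finset.Ico m (m+1+n), a i * x i) = a m * x m + A := by
      rw [Finset.sum_eq_sum_Ico_succ_bot hmlt]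
    have hsplit2 : (∑ j ∈ Finset.Ico m (m+1+n),
        (c j) ^ 2 * (∑ i ∈ Finset.Ico j (m+1+n), a i * x i) ^ 2)
        = (c m)^2 * (a m * x m + A)^2
          + ∑ j ∈ Finset.Ico (m+1) (m+1+n),
              (c j) ^ 2 * (∑ i ∈ Finset.Ico j (m+1+n), a i * x i) ^ 2 := by
      rw [Finset.sum_eq_sum_Ico_succ_bot hmlt, hsplit1]
    have hsplit3 : (∑ i ∈ Finset.Ico m (m+1+n),
        (a i) ^ 2 * (t + ∑ j ∈ Finset.Ico m (i+1), c j * x j) ^ 2)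
        = (a m)^2 * s^2
          + ∑ i ∈ Finset.Ico (m+1) (m+1+n),
              (a i) ^ 2 * (s + ∑ j ∈ Finset.Ico (m+1) (i+1), c j * x j) ^ 2 := by
      rw [Finset.sum_eq_sum_Ico_succ_bot hmlt]
      congr 1
      · congr 1
        rw [Finset.sum_eq_sum_Ico_succ_bot (by omega : m < m + 1), Finset.Ico_self,
          Finset.sum_empty, hs_def]
        ring
      · apply Finset.sum_congr rfl
        intro i hi
        have hmi : m < i + 1 := by
          simp only [Finset.mem_Ico] at hi; omega
        rw [Finset.sum_eq_sum_Ico_succ_bot hmi, hs_def]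
        ring_nf
    have hsplit4 : (t + ∑ j ∈ Finset.Ico m (m+1+n), c j * x j)
        = s + ∑ j ∈ Finset.Ico (m+1) (m+1+n), c j * x j := by
      rw [Finset.sum_eq_sum_Ico_succ_bot hmlt, hs_def]; ring
    have hAw : A = w - u * s := by
      rw [hw_def, hs_def, hu_def]; field_simp; ring
    have hAv : A + v * s = w - (u - v) * s := by rw [hAw]; ring
    rw [hAv] at hIH
    rw [hAw] at hIH
    rw [hsplit1, hsplit2, hsplit3, hsplit4]
    have e1 : δ * (c m / a m) * (a m * x m + A + a m / c m * t) ^ 2 = (δ/u) * w^2 := by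
      rw [hw_def, hu_def, div_div_eq_mul_div, mul_div_assoc]
    rw [e1]
    have hu0 : 0 < u := by rw [hu_def]; exact div_pos (ha m) (hc m)
    have hv0 : 0 < v := by rw [hv_def]; exact div_pos (ha (m+1)) (hc (m+1))
    have hstep := step_ineq u v (u - v) (a m * c m) (a (m+1) * c (m+1)) δ w s hu0 hv0 rfl
      (by rw [hu_def, hv_def]; exact hL m) (by rw [hu_def, hv_def]; exact hR m)
    rw [show δ * (c (m+1) / a (m+1)) = δ / v from by
      rw [hv_def, div_div_eq_mul_div, mul_div_assoc]] at hIH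
    rw [show a (m+1) * c (m+1) / v = c (m+1)^2 from by
      rw [hv_def]; field_simp] at hstep
    rw [show a m * c m * u = a m ^ 2 from by rw [hu_def]; field_simp] at hstep
    linarith [hIH, hstep]

/-- The key real finite-dimensional inequality. -/
private lemma real_key (a c : ℕ → ℝ) (ha : ∀ i, 0 < a i) (hc : ∀ j, 0 < c j) (δ : ℝ)
    (hδ0 : c 0 * a 0 ≤ δ)
    (hL : ∀ k, δ * (a k / c k - a (k+1) / c (k+1)) ≤ (a k * c k) * (a k / c k))
    (hR : ∀ k, (a (k+1) * c (k+1)) * (a k / c k) ≤ δ * (a k / c k - a (k+1) / c (k+1)))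
    (N : ℕ) (x : ℕ → ℝ) :
    ∑ j ∈ Finset.range N, (c j) ^ 2 * (∑ i ∈ Finset.Ico j N, a i * x i) ^ 2
    ≤ (∑ i ∈ Finset.range N, (a i) ^ 2 * (∑ j ∈ Finset.range (i+1), c j * x j) ^ 2)
      + δ * (a N / c N) * (∑ j ∈ Finset.range N, c j * x j) ^ 2 := by
  have haux := aux_ind a c ha hc δ hL hR N 0 0 x
  simp only [Nat.zero_add, mul_zero, add_zero, zero_add] at haux
  simp only [Finset.range_eq_Ico]
  have h1 : (c 0)^2 * (∑ i ∈ Finset.Ico 0 N, a i * x i) ^ 2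
      ≤ δ * (c 0 / a 0) * (∑ i ∈ Finset.Ico 0 N, a i * x i) ^ 2 := by
    apply mul_le_mul_of_nonneg_right _ (sq_nonneg _)
    rw [← mul_div_assoc, le_div_iff₀ (ha 0)]
    nlinarith [hc 0, ha 0]
  linarith [haux, h1]


/-- Complex version of the key inequality. -/
private lemma complex_key (a c : ℕ → ℝ) (ha : ∀ i, 0 < a i) (hc : ∀ j, 0 < c j) (δ : ℝ)
    (hδ0 : c 0 * a 0 ≤ δ)
    (hL : ∀ k, δ * (a k / c k - a (k+1) / c (k+1)) ≤ (a k * c k) * (a k / c k))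
    (hR : ∀ k, (a (k+1) * c (k+1)) * (a k / c k) ≤ δ * (a k / c k - a (k+1) / c (k+1)))
    (N : ℕ) (x : ℕ → ℂ) :
    ∑ j ∈ Finset.range N, (c j) ^ 2 * Complex.normSq (∑ i ∈ Finset.Ico j N, (a i : ℂ) * x i)
    ≤ (∑ i ∈ Finset.range N, (a i) ^ 2 *
        Complex.normSq (∑ j ∈ Finset.range (i+1), (c j : ℂ) * x j))
      + δ * (a N / c N) * Complex.normSq (∑ j ∈ Finset.range N, (c j : ℂ) * x j) := by
  have hre := real_key a c ha hc δ hδ0 hL hR N (fun i => (x i).re)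
  have him := real_key a c ha hc δ hδ0 hL hR N (fun i => (x i).im)
  have hrsum : ∀ (s : Finset ℕ) (r : ℕ → ℝ),
      (∑ i ∈ s, (r i : ℂ) * x i).re = ∑ i ∈ s, r i * (x i).re := by
    intro s r
    rw [Complex.re_sum]
    exact Finset.sum_congr rfl fun i _ => by simp [Complex.mul_re]
  have hisum : ∀ (s : Finset ℕ) (r : ℕ → ℝ),
      (∑ i ∈ s, (r i : ℂ) * x i).im = ∑ i ∈ s, r i * (x i).im := by
    intro s r
    rw [Complex.im_sum]
    exact Finset.sum_congr rfl fun i _ => by simp [Complex.mul_im]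
  have hns : ∀ z : ℂ, Complex.normSq z = z.re^2 + z.im^2 := fun z => by
    rw [Complex.normSq_apply]; ring
  simp only [hns, hrsum, hisum, mul_add]
  rw [Finset.sum_add_distrib, Finset.sum_add_distrib]
  linarith [hre, him]

end Aux

/-- Sufficient conditions for hyponormality of a bounded factorable matrix. -/
theorem factorable_hyponormal
    (a c : ℕ → ℝ) (ha : ∀ i, 0 < a i) (hc : ∀ j, 0 < c j)
    (hdec : StrictAnti fun k => a k / c k)
    (hlim : Tendsto (fun k => a k / c k) atTop (nhds 0))
    (hbdd : ∃ B : ℝ, ∀ k : ℕ, a k * c k / (a (k + 1) * c (k + 1)) ≤ B)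
    (δ : ℝ) (hδ : 0 < δ) (hδ0 : c 0 * a 0 ≤ δ)
    (hineq : ∀ k : ℕ,
      (1 / δ) * (a k / c k) * (δ - c k * a k) ≤ a (k + 1) / c (k + 1) ∧
      a (k + 1) / c (k + 1) ≤ δ * (a k / c k) / (δ + (c (k + 1)) ^ 2 * (a k / c k)))
    (M : lp (fun _ : ℕ => ℂ) 2 →L[ℂ] lp (fun _ : ℕ => ℂ) 2)
    (hM : ∀ f : lp (fun _ : ℕ => ℂ) 2, ∀ i : ℕ,
      M f i = (a i : ℂ) * ∑ j ∈ Finset.range (i + 1), (c j : ℂ) * f j) :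
    (adjoint M ∘L M - M ∘L adjoint M).IsPositive := by
  -- derived inequalities
  have hL : ∀ k, δ * (a k / c k - a (k+1) / c (k+1)) ≤ (a k * c k) * (a k / c k) := by
    intro k
    have h1 := (hineq k).1
    have h2 : (1 / δ) * (a k / c k) * (δ - c k * a k)
        = ((a k / c k) * (δ - c k * a k)) / δ := by ring
    rw [h2, div_le_iff₀ hδ] at h1
    nlinarith [h1]
  have hR : ∀ k, (a (k+1) * c (k+1)) * (a k / c k)
      ≤ δ * (a k / c k - a (k+1) / c (k+1)) := by
    intro k
    have h2 := (hineq k).2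
    have hpos : 0 < δ + (c (k+1))^2 * (a k / c k) := by
      have := div_pos (ha k) (hc k)
      nlinarith [sq_nonneg (c (k+1)), mul_pos (mul_pos (hc (k+1)) (hc (k+1))) this]
    rw [le_div_iff₀ hpos] at h2
    have e2 : (c (k+1))^2 * (a (k+1) / c (k+1)) = a (k+1) * c (k+1) := by
      have hne := (hc (k+1)).ne'
      field_simp
    have e := congrArg (fun z => z * (a k / c k)) e2
    nlinarith [h2, e]
  have hu_pos : ∀ k, 0 < a k / c k := fun k => div_pos (ha k) (hc k)
  have hu_dec : ∀ k, a (k+1) / c (k+1) < a k / c k := by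
    intro k
    exact hdec (Nat.lt_succ_self k)
  -- summability of a^2
  have hsq_le : ∀ k, (a (k+1))^2 ≤ δ * (a k / c k - a (k+1) / c (k+1)) := by
    intro k
    have e : (a (k+1))^2 = (a (k+1) * c (k+1)) * (a (k+1) / c (k+1)) := by
      have hne := (hc (k+1)).ne'
      field_simp
    have h3 : (a (k+1) * c (k+1)) * (a (k+1) / c (k+1))
        ≤ (a (k+1) * c (k+1)) * (a k / c k) :=
      mul_le_mul_of_nonneg_left (le_of_lt (hu_dec k))
        (le_of_lt (mul_pos (ha (k+1)) (hc (k+1))))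
    rw [e]
    exact le_trans h3 (hR k)
  have hsummable : Summable (fun i => (a i)^2) := by
    have h1 : ∀ n, ∑ k ∈ Finset.range n, (a (k+1))^2 ≤ δ * (a 0 / c 0) := by
      intro n
      calc ∑ k ∈ Finset.range n, (a (k+1))^2
          ≤ ∑ k ∈ Finset.range n, δ * (a k / c k - a (k+1) / c (k+1)) :=
            Finset.sum_le_sum fun k _ => hsq_le k
        _ = ∑ k ∈ Finset.range n, (δ * (a k / c k) - δ * (a (k+1) / c (k+1))) := by
            apply Finset.sum_congr rfl; intros; ring
        _ = δ * (a 0 / c 0) - δ * (a n / c n) := Finset.sum_range_sub' (fun k => δ * (a k / c k)) n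
        _ ≤ δ * (a 0 / c 0) := by
            have := mul_pos hδ (hu_pos n); linarith
    have h2 : Summable (fun k => (a (k+1))^2) :=
      summable_of_sum_range_le (fun k => sq_nonneg _) h1
    exact (summable_nat_add_iff 1).mp h2
  have hsq_ge : ∀ k, δ * (a k / c k - a (k+1) / c (k+1)) ≤ (a k)^2 := by
    intro k
    have e : (a k)^2 = (a k * c k) * (a k / c k) := by
      have hne := (hc k).ne'
      field_simp
    rw [e]
    exact hL k
  have htail : ∀ N : ℕ, δ * (a N / c N) ≤ ∑' i, (a (i + N))^2 := by
    intro N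
    have hsN : Summable (fun i => (a (i + N))^2) := (summable_nat_add_iff N).mpr hsummable
    have hbound : ∀ n : ℕ,
        δ * (a N / c N) - δ * (a (n + N) / c (n + N)) ≤ ∑' i, (a (i + N))^2 := by
      intro n
      have hts : ∑ k ∈ Finset.range n, (δ * (a (k + N) / c (k + N))
            - δ * (a (k + 1 + N) / c (k + 1 + N)))
          = δ * (a (0 + N) / c (0 + N)) - δ * (a (n + N) / c (n + N)) :=
        Finset.sum_range_sub' (fun k => δ * (a (k + N) / c (k + N))) n
      rw [Nat.zero_add] at hts
      rw [← hts]
      calc ∑ k ∈ Finset.range n, (δ * (a (k + N) / c (k + N))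
            - δ * (a (k + 1 + N) / c (k + 1 + N)))
          ≤ ∑ k ∈ Finset.range n, (a (k + N))^2 := by
            apply Finset.sum_le_sum
            intro k _
            have h4 := hsq_ge (k + N)
            have e1 : k + 1 + N = k + N + 1 := by omega
            rw [e1]
            linarith [h4]
        _ ≤ ∑' i, (a (i + N))^2 := Summable.sum_le_tsum _ (fun k _ => sq_nonneg _) hsN
    have hlim2 : Tendsto (fun n => δ * (a N / c N) - δ * (a (n + N) / c (n + N))) atTop
        (nhds (δ * (a N / c N) - δ * 0)) := by
      apply Tendsto.sub tendsto_const_nhds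
      exact (hlim.comp (tendsto_add_atTop_nat N)).const_mul δ
    rw [mul_zero, sub_zero] at hlim2
    exact le_of_tendsto hlim2 (Filter.Eventually.of_forall hbound)
  -- coordinatewise HasSum of squared norms
  have coordHS : ∀ f : lp (fun _ : ℕ => ℂ) 2, HasSum (fun i => ‖f i‖^2) (‖f‖^2) := by
    intro f
    have h := (lp.hasSum_inner (𝕜 := ℂ) f f).mapL Complex.reCLM
    simp only [RCLike.inner_apply, Complex.reCLM_apply] at h
    convert h using 2 with i
    · rw [Complex.mul_re]
      simp [Complex.normSq_apply, Complex.sq_norm]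
    · exact (inner_self_eq_norm_sq (𝕜 := ℂ) f).symm
  have hz : ∀ z : ℂ, ‖z‖^2 = Complex.normSq z := fun z => by
    rw [Complex.sq_norm]
  -- the finitely supported case
  have fin_case : ∀ (x : lp (fun _ : ℕ => ℂ) 2) (N : ℕ), (∀ i, N ≤ i → x i = 0) →
      ‖adjoint M x‖ ≤ ‖M x‖ := by
    intro x N hx
    -- matrix columns
    have hMs : ∀ j i : ℕ, (M (lp.single (E := fun _ : ℕ => ℂ) 2 j (1:ℂ))) i
        = if j ≤ i then (a i : ℂ) * (c j : ℂ) else 0 := by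
      intro j i
      rw [hM]
      have hs : ∑ j' ∈ Finset.range (i+1), (c j' : ℂ) * (lp.single (E := fun _ : ℕ => ℂ) 2 j (1:ℂ)) j'
          = if j ≤ i then (c j : ℂ) else 0 := by
        simp [lp.single_apply, Pi.single_apply, mul_ite, Finset.sum_ite_eq, Finset.sum_ite_eq', Nat.lt_succ_iff]
      rw [hs]
      by_cases hji : j ≤ i
      · rw [if_pos hji, if_pos hji]
      · rw [if_neg hji, if_neg hji, mul_zero]
    -- adjoint coordinates
    have hadj : ∀ j, (adjoint M x) j
        = (c j : ℂ) * ∑ i ∈ Finset.Ico j N, (a i : ℂ) * x i := by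
      intro j
      have h0 : inner (𝕜 := ℂ) (lp.single (E := fun _ : ℕ => ℂ) 2 j (1:ℂ)) (adjoint M x) = (adjoint M x) j := by
        rw [lp.inner_single_left]
        simp [RCLike.inner_apply]
      rw [← h0, adjoint_inner_right, lp.inner_eq_tsum]
      simp only [RCLike.inner_apply, hMs]
      rw [tsum_eq_sum (s := Finset.Ico j N) ?_]
      · rw [Finset.mul_sum]
        apply Finset.sum_congr rfl
        intro i hi
        rw [Finset.mem_Ico] at hi
        rw [if_pos hi.1, map_mul, Complex.conj_ofReal, Complex.conj_ofReal]
        ring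
      · intro i hi
        rw [Finset.mem_Ico] at hi
        push_neg at hi
        by_cases hji : j ≤ i
        · rw [if_pos hji, hx i (hi hji), zero_mul]
        · rw [if_neg hji, map_zero, mul_zero]
    have hadj0 : ∀ j, N ≤ j → (adjoint M x) j = 0 := by
      intro j hj
      rw [hadj, Finset.Ico_eq_empty (by omega), Finset.sum_empty, mul_zero]
    -- norm of adjoint M x
    have hnormA : ‖adjoint M x‖^2
        = ∑ j ∈ Finset.range N, (c j)^2 *
            Complex.normSq (∑ i ∈ Finset.Ico j N, (a i : ℂ) * x i) := by
      rw [← (coordHS (adjoint M x)).tsum_eq, tsum_eq_sum (s := Finset.range N) ?_]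
      · apply Finset.sum_congr rfl
        intro j _
        rw [hadj, norm_mul, mul_pow, Complex.norm_real, Real.norm_eq_abs, sq_abs, hz]
      · intro j hj
        rw [hadj0 j (by simpa using hj)]
        simp
    -- tail coordinates of M x
    have hMxtail : ∀ i : ℕ, (M x) (i + N)
        = (a (i+N) : ℂ) * (∑ j ∈ Finset.range N, (c j : ℂ) * x j) := by
      intro i
      rw [hM]
      congr 1
      refine (Finset.sum_subset (Finset.range_subset_range.mpr (by omega)) ?_).symm
      intro j _ hj
      rw [Finset.mem_range, not_lt] at hj
      rw [hx j hj, mul_zero]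
    -- lower bound for ‖M x‖²
    have hnormM : (∑ i ∈ Finset.range N, (a i)^2 *
          Complex.normSq (∑ j ∈ Finset.range (i+1), (c j : ℂ) * x j))
        + δ * (a N / c N) * Complex.normSq (∑ j ∈ Finset.range N, (c j : ℂ) * x j)
        ≤ ‖M x‖^2 := by
      have h := coordHS (M x)
      rw [← h.tsum_eq, ← Summable.sum_add_tsum_nat_add N h.summable]
      have h1 : ∑ i ∈ Finset.range N, ‖(M x) i‖^2
          = ∑ i ∈ Finset.range N, (a i)^2 *
              Complex.normSq (∑ j ∈ Finset.range (i+1), (c j : ℂ) * x j) := by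
        apply Finset.sum_congr rfl
        intro i _
        rw [hM, norm_mul, mul_pow, Complex.norm_real, Real.norm_eq_abs, sq_abs, hz]
      have h2 : δ * (a N / c N) * Complex.normSq (∑ j ∈ Finset.range N, (c j : ℂ) * x j)
          ≤ ∑' i, ‖(M x) (i + N)‖^2 := by
        have h3 : ∀ i : ℕ, ‖(M x) (i + N)‖^2
            = (a (i+N))^2 * Complex.normSq (∑ j ∈ Finset.range N, (c j : ℂ) * x j) := by
          intro i
          rw [hMxtail, norm_mul, mul_pow, Complex.norm_real, Real.norm_eq_abs, sq_abs, hz]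
        rw [tsum_congr h3, tsum_mul_right]
        exact mul_le_mul_of_nonneg_right (htail N) (Complex.normSq_nonneg _)
      linarith [h1, h2]
    -- combine
    have hkey := complex_key a c ha hc δ hδ0 hL hR N (fun i => x i)
    simp only at hkey
    have hsq : ‖adjoint M x‖^2 ≤ ‖M x‖^2 := by
      rw [hnormA]
      linarith [hkey, hnormM]
    nlinarith [norm_nonneg (adjoint M x), norm_nonneg (M x), hsq]
  -- density argument
  have key : ∀ x : lp (fun _ : ℕ => ℂ) 2, ‖adjoint M x‖ ≤ ‖M x‖ := by
    intro x
    have hdense : x ∈ closure {y : lp (fun _ : ℕ => ℂ) 2 | ∃ N, ∀ i, N ≤ i → y i = 0} := by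
      have hs := lp.hasSum_single (E := fun _ : ℕ => ℂ) (p := 2) (by norm_num) x
      refine mem_closure_of_tendsto hs (Filter.Eventually.of_forall ?_)
      intro F
      refine ⟨(F.sup id) + 1, fun i hi => ?_⟩
      have hcoe : (∑ j ∈ F, lp.single 2 j (x j)) i
          = ∑ j ∈ F, (lp.single 2 j (x j) : ∀ _, ℂ) i := by
        rw [lp.coeFn_sum, Finset.sum_apply]
      rw [hcoe]
      apply Finset.sum_eq_zero
      intro j hj
      apply lp.single_apply_ne
      intro h
      subst h
      have := Finset.le_sup (f := id) hj
      simp only [id_eq] at this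
      omega
    have hclosed : IsClosed {y : lp (fun _ : ℕ => ℂ) 2 | ‖adjoint M y‖ ≤ ‖M y‖} :=
      isClosed_le ((adjoint M).continuous.norm) (M.continuous.norm)
    exact closure_minimal (fun y hy => by obtain ⟨N, hN⟩ := hy; exact fin_case y N hN)
      hclosed hdense
  -- assemble positivity
  rw [ContinuousLinearMap.isPositive_def']
  constructor
  · rw [ContinuousLinearMap.isSelfAdjoint_iff', map_sub, adjoint_comp, adjoint_comp,
      adjoint_adjoint]
  · intro x
    rw [ContinuousLinearMap.reApplyInnerSelf_apply, ContinuousLinearMap.sub_apply,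
      ContinuousLinearMap.comp_apply, ContinuousLinearMap.comp_apply, inner_sub_left, map_sub]
    have e1 : inner (𝕜 := ℂ) ((adjoint M) (M x)) x = inner (𝕜 := ℂ) (M x) (M x) :=
      adjoint_inner_left M x (M x)
    have e2 : inner (𝕜 := ℂ) (M ((adjoint M) x)) x
        = inner (𝕜 := ℂ) ((adjoint M) x) ((adjoint M) x) := by
      have h := adjoint_inner_left (adjoint M) x ((adjoint M) x)
      rwa [adjoint_adjoint] at h
    rw [e1, e2, inner_self_eq_norm_sq (𝕜 := ℂ), inner_self_eq_norm_sq (𝕜 := ℂ)]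
    have := key x
    have h1 : ‖adjoint M x‖^2 ≤ ‖M x‖^2 := by
      apply pow_le_pow_left₀ (norm_nonneg _) this
    linarith [h1]
end

section
/- The lower triangular Toeplitz-type factorable matrix M on ℓ² with entries m_{ij} = r^{i−j} for j ≤ i (and 0 otherwise), where 0 < r < 1, is a bounded hyponormal operator. -/
set_option maxHeartbeats 1000000

open ContinuousLinearMap
open scoped ENNReal ComplexConjugate

noncomputable section ToepAuxSection

namespace ToepAux

abbrev H : Type := lp (fun _ : ℕ => ℂ) 2

lemma htp : (0:ℝ) < (2 : ℝ≥0∞).toReal := by norm_num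

def sFun (f : ℕ → ℂ) : ℕ → ℂ := fun i => match i with
  | 0 => 0
  | n+1 => f n

lemma memℓp_sFun (f : H) : Memℓp (sFun (f : ℕ → ℂ)) 2 := by
  apply memℓp_gen
  have hf : Summable fun i => ‖(f : ℕ → ℂ) i‖ ^ (2:ℝ≥0∞).toReal :=
    (memℓp_gen_iff htp).1 (lp.memℓp f)
  refine (summable_nat_add_iff 1).1 ?_
  simpa [sFun] using hf

lemma memℓp_tFun (f : H) : Memℓp (fun i => (f : ℕ → ℂ) (i+1)) 2 := by
  apply memℓp_gen
  have hf : Summable fun i => ‖(f : ℕ → ℂ) i‖ ^ (2:ℝ≥0∞).toReal :=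
    (memℓp_gen_iff htp).1 (lp.memℓp f)
  exact (summable_nat_add_iff 1).2 hf

def Slin : H →ₗ[ℂ] H where
  toFun f := ⟨sFun (f : ℕ → ℂ), memℓp_sFun f⟩
  map_add' f g := by
    ext i
    cases i <;> simp [sFun, lp.coeFn_add] <;> erw [Pi.add_apply] <;> simp [sFun]
  map_smul' c f := by
    ext i
    cases i <;> simp [sFun, lp.coeFn_smul]

def Tlin : H →ₗ[ℂ] H where
  toFun f := ⟨fun i => (f : ℕ → ℂ) (i+1), memℓp_tFun f⟩
  map_add' f g := by
    ext i
    simp [lp.coeFn_add]; erw [Pi.add_apply]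
  map_smul' c f := by
    ext i
    simp [lp.coeFn_smul]

lemma summable_norm_sq (f : H) : Summable fun i => ‖(f : ℕ → ℂ) i‖ ^ (2:ℝ≥0∞).toReal :=
  (memℓp_gen_iff htp).1 (lp.memℓp f)

lemma norm_Slin (f : H) : ‖Slin f‖ = ‖f‖ := by
  rw [lp.norm_eq_tsum_rpow htp, lp.norm_eq_tsum_rpow htp]
  congr 1
  have hs : Summable fun i => ‖(Slin f : ℕ → ℂ) i‖ ^ (2:ℝ≥0∞).toReal :=
    summable_norm_sq (Slin f)
  rw [Summable.tsum_eq_zero_add hs]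
  have h0 : (Slin f : ℕ → ℂ) 0 = 0 := rfl
  have h1 : ∀ n, (Slin f : ℕ → ℂ) (n+1) = (f : ℕ → ℂ) n := fun n => rfl
  simp [h0, h1, Real.zero_rpow (by norm_num : ((2:ℝ≥0∞).toReal) ≠ 0)]

lemma norm_Tlin_le (f : H) : ‖Tlin f‖ ≤ ‖f‖ := by
  rw [lp.norm_eq_tsum_rpow htp, lp.norm_eq_tsum_rpow htp]
  apply Real.rpow_le_rpow
  · exact tsum_nonneg fun i => Real.rpow_nonneg (norm_nonneg _) _
  · have hs := summable_norm_sq f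
    have h1 : Summable fun i => ‖(f : ℕ → ℂ) (i+1)‖ ^ (2:ℝ≥0∞).toReal :=
      (summable_nat_add_iff 1).2 hs
    calc ∑' i, ‖(Tlin f : ℕ → ℂ) i‖ ^ (2:ℝ≥0∞).toReal
        = ∑' i, ‖(f : ℕ → ℂ) (i+1)‖ ^ (2:ℝ≥0∞).toReal := rfl
      _ ≤ ‖(f : ℕ → ℂ) 0‖ ^ (2:ℝ≥0∞).toReal + ∑' i, ‖(f : ℕ → ℂ) (i+1)‖ ^ (2:ℝ≥0∞).toReal :=
          le_add_of_nonneg_left (Real.rpow_nonneg (norm_nonneg _) _)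
      _ = ∑' i, ‖(f : ℕ → ℂ) i‖ ^ (2:ℝ≥0∞).toReal := (Summable.tsum_eq_zero_add hs).symm
  · positivity

def S : H →L[ℂ] H := Slin.mkContinuous 1 (fun f => by rw [norm_Slin]; simp)

def T : H →L[ℂ] H := Tlin.mkContinuous 1 (fun f => by simpa using norm_Tlin_le f)

@[simp] lemma S_apply_zero (f : H) : (S f : ℕ → ℂ) 0 = 0 := rfl
@[simp] lemma S_apply_succ (f : H) (n : ℕ) : (S f : ℕ → ℂ) (n+1) = (f : ℕ → ℂ) n := rfl
@[simp] lemma T_apply (f : H) (n : ℕ) : (T f : ℕ → ℂ) n = (f : ℕ → ℂ) (n+1) := rfl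

lemma norm_S_le : ‖S‖ ≤ 1 := LinearMap.mkContinuous_norm_le _ zero_le_one _

lemma hTS : (T * S : H →L[ℂ] H) = 1 := by
  ext f i
  rfl

lemma hadjS : ContinuousLinearMap.adjoint S = T := by
  symm
  rw [eq_adjoint_iff]
  intro x y
  rw [lp.inner_eq_tsum, lp.inner_eq_tsum]
  rw [Summable.tsum_eq_zero_add (lp.summable_inner (𝕜 := ℂ) x (S y))]
  simp

def P : H →L[ℂ] H := 1 - S * T

lemma starS : star S = T := by rw [star_eq_adjoint, hadjS]
lemma starT : star T = S := by rw [← starS, star_star]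

lemma hTS' : ∀ x : H →L[ℂ] H, T * (S * x) = x := fun x => by rw [← mul_assoc, hTS, one_mul]
lemma hPS : P * S = 0 := by simp [P, sub_mul, mul_assoc, hTS, hTS']
lemma hTP : T * P = 0 := by simp [P, mul_sub, mul_assoc, hTS, hTS']
lemma hPP : P * P = P := by simp [P, sub_mul, mul_sub, mul_assoc, hTS, hTS']
lemma starP : star P = P := by simp [P, star_sub, star_one, star_mul, starS, starT]
lemma adjP : ContinuousLinearMap.adjoint P = P := by rw [← star_eq_adjoint, starP]

lemma Ppos : P.IsPositive := by
  refine isPositive_def'.2 ⟨starP, fun x => ?_⟩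
  rw [reApplyInnerSelf_apply]
  have h : P x = P (P x) := by
    conv_lhs => rw [← hPP]
    rfl
  rw [h, ← adjP, adjoint_inner_left, adjP]
  exact inner_self_nonneg

variable {r : ℝ}

lemma hPN : P * (1 - (r:ℂ) • S) = P := by
  rw [mul_sub, mul_one, mul_smul_comm, hPS, smul_zero, sub_zero]

lemma hNP : (1 - (r:ℂ) • T) * P = P := by
  rw [sub_mul, one_mul, smul_mul_assoc, hTP, smul_zero, sub_zero]

lemma h1 : (1 - (r:ℂ) • T) * (1 - (r:ℂ) • S) - (1 - (r:ℂ) • S) * (1 - (r:ℂ) • T)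
    = ((r:ℂ)^2) • P := by
  rw [P]
  simp only [mul_sub, sub_mul, one_mul, mul_one, smul_mul_assoc, mul_smul_comm,
    smul_smul, hTS, smul_sub]
  match_scalars <;> ring

lemma hkey : (1 - (r:ℂ) • S) * (1 - (r:ℂ) • T)
    = (1 - (r:ℂ) • T) * (1 - ((r:ℂ)^2) • P) * (1 - (r:ℂ) • S) := by
  have h2 : (1 - ((r:ℂ)^2) • P) * (1 - (r:ℂ) • S)
      = (1 - (r:ℂ) • S) - ((r:ℂ)^2) • P := by
    rw [sub_mul, one_mul, smul_mul_assoc, hPN]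
  rw [mul_assoc, h2, mul_sub (1 - (r:ℂ) • T) (1 - (r:ℂ) • S) (((r:ℂ)^2) • P),
    mul_smul_comm, hNP]
  have := h1 (r := r)
  linear_combination (norm := module) -this

lemma hnorm (hr0 : 0 < r) (hr1 : r < 1) : ‖(r:ℂ) • S‖ < 1 := by
  have h2 : ‖(r:ℂ)‖ = r := by
    rw [Complex.norm_real, Real.norm_eq_abs, abs_of_pos hr0]
  calc ‖(r:ℂ) • S‖ ≤ ‖(r:ℂ)‖ * ‖S‖ := ContinuousLinearMap.opNorm_smul_le _ _
    _ ≤ r * 1 := by rw [h2]; exact mul_le_mul_of_nonneg_left norm_S_le hr0.le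
    _ < 1 := by linarith

def creal (r : ℝ) : ℝ := r^2 / (1 - r^2)

lemma creal_nonneg (hr0 : 0 < r) (hr1 : r < 1) : 0 ≤ creal r := by
  exact div_nonneg (sq_nonneg r) (by nlinarith)

lemma scalar_id (hr0 : 0 < r) (hr1 : r < 1) :
    ((creal r : ℝ) : ℂ) - (r:ℂ)^2 - (r:ℂ)^2 * ((creal r : ℝ) : ℂ) = 0 := by
  have h : (1:ℝ) - r^2 ≠ 0 := by nlinarith
  have hre : creal r - r^2 - r^2 * creal r = 0 := by
    rw [creal]; field_simp; ring
  calc ((creal r : ℝ) : ℂ) - (r:ℂ)^2 - (r:ℂ)^2 * ((creal r : ℝ) : ℂ)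
      = ((creal r - r^2 - r^2*creal r : ℝ) : ℂ) := by push_cast; ring
    _ = 0 := by rw [hre]; simp

def u (hr0 : 0 < r) (hr1 : r < 1) : (H →L[ℂ] H)ˣ :=
  Units.oneSub ((r:ℂ) • S) (hnorm hr0 hr1)

lemma star_uval (hr0 : 0 < r) (hr1 : r < 1) :
    star ((u hr0 hr1 : (H →L[ℂ] H)ˣ) : H →L[ℂ] H) = 1 - (r:ℂ) • T := by
  show star (1 - (r:ℂ) • S) = _
  rw [star_sub, star_one, star_smul, starS]
  norm_num

def v (hr0 : 0 < r) (hr1 : r < 1) : (H →L[ℂ] H)ˣ where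
  val := star ((u hr0 hr1 : (H →L[ℂ] H)ˣ) : H →L[ℂ] H)
  inv := star (((u hr0 hr1)⁻¹ : (H →L[ℂ] H)ˣ) : H →L[ℂ] H)
  val_inv := by rw [← star_mul, Units.inv_mul, star_one]
  inv_val := by rw [← star_mul, Units.mul_inv, star_one]

def w (hr0 : 0 < r) (hr1 : r < 1) : (H →L[ℂ] H)ˣ where
  val := 1 - ((r:ℂ)^2) • P
  inv := 1 + ((creal r : ℝ) : ℂ) • P
  val_inv := by
    rw [sub_mul, mul_add, mul_add, one_mul, one_mul, mul_one, smul_mul_assoc,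
      mul_smul_comm, smul_smul, hPP]
    rw [show (1:H →L[ℂ] H) + (creal r : ℂ) • P - ((r:ℂ)^2 • P + ((r:ℂ)^2 * (creal r : ℂ)) • P)
        = 1 + ((creal r : ℂ) - (r:ℂ)^2 - (r:ℂ)^2 * (creal r : ℂ)) • P by module]
    rw [scalar_id hr0 hr1]
    simp
  inv_val := by
    rw [add_mul, mul_sub, mul_sub, one_mul, one_mul, mul_one, smul_mul_assoc,
      mul_smul_comm, smul_smul, hPP]
    rw [show (1:H →L[ℂ] H) - (r:ℂ)^2 • P + ((creal r : ℂ) • P - ((creal r : ℂ) * (r:ℂ)^2) • P)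
        = 1 + ((creal r : ℂ) - (r:ℂ)^2 - (r:ℂ)^2 * (creal r : ℂ)) • P by module]
    rw [scalar_id hr0 hr1]
    simp

variable (hr0 : 0 < r) (hr1 : r < 1)

lemma huvw : u hr0 hr1 * v hr0 hr1 = v hr0 hr1 * w hr0 hr1 * u hr0 hr1 := by
  apply Units.ext
  show ((u hr0 hr1 : (H →L[ℂ] H)ˣ) : H →L[ℂ] H) * star ((u hr0 hr1 : (H →L[ℂ] H)ˣ) : H →L[ℂ] H)
    = star ((u hr0 hr1 : (H →L[ℂ] H)ˣ) : H →L[ℂ] H) * (1 - ((r:ℂ)^2) • P) * _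
  rw [star_uval]
  exact hkey

lemma hinv : (v hr0 hr1)⁻¹ * (u hr0 hr1)⁻¹
    = (u hr0 hr1)⁻¹ * ((w hr0 hr1)⁻¹ * (v hr0 hr1)⁻¹) := by
  have h := congrArg (·⁻¹) (huvw hr0 hr1)
  simp only [mul_inv_rev] at h
  rw [h]

lemma hMfinal :
    star (((u hr0 hr1)⁻¹ : (H →L[ℂ] H)ˣ) : H →L[ℂ] H) * (((u hr0 hr1)⁻¹ : (H →L[ℂ] H)ˣ) : H →L[ℂ] H)
      - (((u hr0 hr1)⁻¹ : (H →L[ℂ] H)ˣ) : H →L[ℂ] H) * star (((u hr0 hr1)⁻¹ : (H →L[ℂ] H)ˣ) : H →L[ℂ] H)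
    = ((creal r : ℝ) : ℂ) • ((((u hr0 hr1)⁻¹ : (H →L[ℂ] H)ˣ) : H →L[ℂ] H) * (P * star (((u hr0 hr1)⁻¹ : (H →L[ℂ] H)ˣ) : H →L[ℂ] H))) := by
  have h := congrArg (Units.val) (hinv hr0 hr1)
  simp only [Units.val_mul] at h
  set M := (((u hr0 hr1)⁻¹ : (H →L[ℂ] H)ˣ) : H →L[ℂ] H)
  have hv : (((v hr0 hr1)⁻¹ : (H →L[ℂ] H)ˣ) : H →L[ℂ] H) = star M := rfl
  have hw : (((w hr0 hr1)⁻¹ : (H →L[ℂ] H)ˣ) : H →L[ℂ] H) = 1 + ((creal r : ℝ) : ℂ) • P := rfl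
  rw [hv, hw] at h
  rw [h, add_mul, one_mul, smul_mul_assoc, mul_add, mul_smul_comm]
  abel

end ToepAux

end ToepAuxSection

open ToepAux

/-- The lower triangular Toeplitz-type factorable matrix with entries r^{i−j}
(0 < r < 1) defines a bounded hyponormal operator on ℓ². -/
theorem toeplitz_factorable_hyponormal (r : ℝ) (hr0 : 0 < r) (hr1 : r < 1) :
    ∃ M : lp (fun _ : ℕ => ℂ) 2 →L[ℂ] lp (fun _ : ℕ => ℂ) 2,
      (∀ f : lp (fun _ : ℕ => ℂ) 2, ∀ i : ℕ,
        M f i = ∑ j ∈ Finset.range (i + 1), ((r : ℂ) ^ (i - j)) * f j) ∧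
      (adjoint M ∘L M - M ∘L adjoint M).IsPositive := by
  classical
  refine ⟨(((u hr0 hr1)⁻¹ : (H →L[ℂ] H)ˣ) : H →L[ℂ] H), ?_, ?_⟩
  · -- the matrix formula
    intro f i
    set M : H →L[ℂ] H := (((u hr0 hr1)⁻¹ : (H →L[ℂ] H)ˣ) : H →L[ℂ] H) with hM
    have hNMf : (1 - (r:ℂ) • S) (M f) = f := by
      have h0 : ((u hr0 hr1 : H →L[ℂ] H) * M) f = (1 : H →L[ℂ] H) f := by
        rw [(u hr0 hr1).mul_inv]
      rw [ContinuousLinearMap.mul_apply, ContinuousLinearMap.one_apply] at h0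
      exact h0
    have hrec : ∀ j, (M f : ℕ → ℂ) j
        = (f : ℕ → ℂ) j + (r:ℂ) * (S (M f) : ℕ → ℂ) j := by
      intro j
      have h := congrArg (fun g : H => (g : ℕ → ℂ) j) hNMf
      simp only [ContinuousLinearMap.sub_apply, ContinuousLinearMap.smul_apply,
        ContinuousLinearMap.one_apply, lp.coeFn_sub, lp.coeFn_smul, Pi.sub_apply,
        Pi.smul_apply, smul_eq_mul] at h
      linear_combination h
    induction i with
    | zero =>
      have h := hrec 0
      simpa using h
    | succ n ih =>
      have h := hrec (n+1)
      rw [S_apply_succ] at h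
      rw [h, ih, Finset.sum_range_succ (f := fun j => ((r : ℂ) ^ (n + 1 - j)) * f j),
        Nat.sub_self, pow_zero, one_mul, Finset.mul_sum]
      rw [Finset.sum_congr rfl (fun j hj => ?_)]
      · ring
      · have hj' : j ≤ n := Nat.lt_succ_iff.mp (Finset.mem_range.mp hj)
        rw [Nat.succ_sub hj', pow_succ']
        ring
  · -- hyponormality
    set M : H →L[ℂ] H := (((u hr0 hr1)⁻¹ : (H →L[ℂ] H)ˣ) : H →L[ℂ] H) with hM
    have hfin := hMfinal hr0 hr1
    have hD : adjoint M ∘L M - M ∘L adjoint M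
        = ((creal r : ℝ) : ℂ) • (M ∘L (P ∘L adjoint M)) := by
      rw [← ContinuousLinearMap.star_eq_adjoint, ← ContinuousLinearMap.mul_def,
        ← ContinuousLinearMap.mul_def, ← ContinuousLinearMap.mul_def,
        ← ContinuousLinearMap.mul_def]
      exact hfin
    rw [hD]
    have hXpos : (M ∘L (P ∘L adjoint M)).IsPositive := by
      have h := Ppos.conj_adjoint M
      simpa [ContinuousLinearMap.comp_assoc] using h
    rw [isPositive_def']
    constructor
    · have hsa := hXpos.isSelfAdjoint
      rw [IsSelfAdjoint, star_smul, hsa.star_eq]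
      simp [Complex.conj_ofReal]
    · intro x
      rw [reApplyInnerSelf_apply, ContinuousLinearMap.smul_apply, inner_smul_left]
      rw [Complex.conj_ofReal, RCLike.re_to_complex, Complex.re_ofReal_mul,
        ← RCLike.re_to_complex]
      have := hXpos.2 x
      rw [reApplyInnerSelf_apply] at this
      exact mul_nonneg (creal_nonneg hr0 hr1) this
end
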